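/- arXiv:1004.3635 — 2 statements merged into one kernel-verified Lean document; each statement's English description precedes it below -/
import Mathlib

section
/- Every random context language is generated by a permitting CD grammar system working in the terminal (t-)mode in which each permitting set attached to a production is either empty or a singleton. -/
/-- Symbols: nonterminals `N` plus terminals `T`. -/
abbrev Symb (N T : Type) := N ⊕ T

/-- `alph w` is the set of symbols occurring in the string `w`. -/
def alph {α : Type} (w : List α) : Set α := {a | a ∈ w}

/-- A (nonerasing) random context grammar: finitely many productions
`(A → x, Per, For)` with `A ∈ N`, `x ∈ (N ∪ T)⁺`, `Per, For ⊆ N`. -/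
structure RCG (N T : Type) where
  rules : Set (N × List (Symb N T) × Set N × Set N)
  fin : rules.Finite
  ne : ∀ r ∈ rules, r.2.1 ≠ []
  start : N

/-- One derivation step of a random context grammar.  The flag `incl` tells whether
the rewritten symbol is included in the context check (`true`: conditions checked
against `alph (uAv)`; `false`: against `alph (uv)`). -/
def RCG.Step {N T : Type} (G : RCG N T) (incl : Bool)
    (s₁ s₂ : List (Symb N T)) : Prop :=
  ∃ A x Per For u v, (A, x, Per, For) ∈ G.rules ∧
    s₁ = u ++ Sum.inl A :: v ∧ s₂ = u ++ x ++ v ∧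
    (∀ B ∈ Per, Sum.inl B ∈ alph (if incl then s₁ else u ++ v)) ∧
    (∀ B ∈ For, Sum.inl B ∉ alph (if incl then s₁ else u ++ v))

/-- The language of a random context grammar (under the chosen derivation definition). -/
def RCG.Lang {N T : Type} (G : RCG N T) (incl : Bool) : Set (List T) :=
  {w | Relation.ReflTransGen (G.Step incl) [Sum.inl G.start] (w.map Sum.inr)}

/-- The family of random context languages over terminal alphabet `T`
(standard definition: rewritten symbol excluded from the context check). -/
def RC (T : Type) : Set (Set (List T)) :=
  {L | ∃ (N : Type) (G : RCG N T), G.Lang false = L}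

/-- A (nonerasing) semi-conditional grammar of degree (1,1): productions
`(A → x, Per, For)` with `Per, For ⊆ N ∪ T` of cardinality at most one. -/
structure SCG (N T : Type) where
  rules : Set (N × List (Symb N T) × Set (Symb N T) × Set (Symb N T))
  fin : rules.Finite
  ne : ∀ r ∈ rules, r.2.1 ≠ []
  per1 : ∀ r ∈ rules, r.2.2.1.Subsingleton
  for1 : ∀ r ∈ rules, r.2.2.2.Subsingleton
  start : N

/-- One derivation step of a semi-conditional grammar; `incl` as in `RCG.Step`. -/
def SCG.Step {N T : Type} (G : SCG N T) (incl : Bool)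
    (s₁ s₂ : List (Symb N T)) : Prop :=
  ∃ A x Per For u v, (A, x, Per, For) ∈ G.rules ∧
    s₁ = u ++ Sum.inl A :: v ∧ s₂ = u ++ x ++ v ∧
    Per ⊆ alph (if incl then s₁ else u ++ v) ∧
    (∀ a ∈ For, a ∉ alph (if incl then s₁ else u ++ v))

/-- The language of a semi-conditional grammar. -/
def SCG.Lang {N T : Type} (G : SCG N T) (incl : Bool) : Set (List T) :=
  {w | Relation.ReflTransGen (G.Step incl) [Sum.inl G.start] (w.map Sum.inr)}

/-- The family SC(1,1): inclusive derivation definition (context `alph (uAv)`). -/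
def SC11 (T : Type) : Set (Set (List T)) :=
  {L | ∃ (N : Type) (G : SCG N T), G.Lang true = L}

/-- The family SC'(1,1): exclusive derivation definition (context `alph (uv)`). -/
def SC11' (T : Type) : Set (Set (List T)) :=
  {L | ∃ (N : Type) (G : SCG N T), G.Lang false = L}

/-- A permitting production `(A → x, Per)` with `Per ⊆ N`. -/
abbrev PermProd (N T : Type) := N × List (Symb N T) × Set N

/-- A derivation step by a permitting component (context checked against `alph (uv)`). -/
def PStep {N T : Type} (P : Set (PermProd N T)) (s₁ s₂ : List (Symb N T)) : Prop :=
  ∃ A x Per u v, (A, x, Per) ∈ P ∧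
    s₁ = u ++ Sum.inl A :: v ∧ s₂ = u ++ x ++ v ∧
    ∀ B ∈ Per, Sum.inl B ∈ alph (u ++ v)

/-- A maximal (`t`-mode) derivation by a component: at least one step, and no
production of the component is applicable to the result. -/
def TStep {N T : Type} (P : Set (PermProd N T)) (s₁ s₂ : List (Symb N T)) : Prop :=
  Relation.TransGen (PStep P) s₁ s₂ ∧ ∀ s₃, ¬ PStep P s₂ s₃

/-- A permitting CD grammar system: finitely many components, each a finite set of
nonerasing permitting productions. -/
structure CDGS (N T : Type) where
  comps : List (Set (PermProd N T))
  comps_ne : comps ≠ []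
  fin : ∀ P ∈ comps, P.Finite
  ne : ∀ P ∈ comps, ∀ r ∈ P, r.2.1 ≠ []
  start : N

/-- The language generated by a permitting CD grammar system in the `t`-mode. -/
def CDGS.Lang {N T : Type} (Γ : CDGS N T) : Set (List T) :=
  {w | Relation.ReflTransGen (fun s₁ s₂ => ∃ P ∈ Γ.comps, TStep P s₁ s₂)
    [Sum.inl Γ.start] (w.map Sum.inr)}

/-- The family CD(P) of languages of permitting CD grammar systems in `t`-mode. -/
def CDP (T : Type) : Set (Set (List T)) :=
  {L | ∃ (N : Type) (Γ : CDGS N T), Γ.Lang = L}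

/-- As `CDP`, but each permitting set is empty or a singleton. -/
def CDP1 (T : Type) : Set (Set (List T)) :=
  {L | ∃ (N : Type) (Γ : CDGS N T),
    (∀ P ∈ Γ.comps, ∀ r ∈ P, r.2.2.Subsingleton) ∧ Γ.Lang = L}

-- ===================== construction =====================
namespace RCCD
set_option linter.unusedVariables false
open List Relation

attribute [local instance] Classical.propDecidable

abbrev Rl (N T : Type) := N × List (Symb N T) × Set N × Set N

inductive Mk (N T : Type) where
  | F : Mk N T
  | pk : Rl N T → Mk N T
  | m2 : Rl N T → Mk N T
  | dd : Rl N T → ℕ → Mk N T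
  | ee : Rl N T → ℕ → Mk N T

abbrev NN (N T : Type) := N ⊕ Mk N T
abbrev Sy (N T : Type) := Symb (NN N T) T

variable {N T : Type}

def emb : Symb N T → Sy N T := Sum.map Sum.inl id
def lift (s : List (Symb N T)) : List (Sy N T) := s.map emb
def nt (m : Mk N T) : Sy N T := Sum.inl (Sum.inr m)
def pl (B : N) : Sy N T := Sum.inl (Sum.inl B)

@[simp] lemma emb_inl (B : N) : (emb (Sum.inl B) : Sy N T) = pl B := rfl
@[simp] lemma emb_inr (t : T) : (emb (Sum.inr t) : Sy N T) = Sum.inr t := rfl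

lemma emb_injective : Function.Injective (emb : Symb N T → Sy N T) := by
  intro a b h
  cases a <;> cases b <;> simp [emb, pl, nt] at h ⊢ <;> simp [h]

lemma nt_ne_emb (m : Mk N T) (a : Symb N T) : nt m ≠ emb a := by
  cases a <;> simp [emb, nt]

lemma nt_not_mem_lift (m : Mk N T) (s : List (Symb N T)) : nt m ∉ lift s := by
  simp only [lift, List.mem_map]
  rintro ⟨a, -, h⟩
  exact nt_ne_emb m a h.symm

lemma lift_append (u v : List (Symb N T)) : lift (u ++ v) = lift u ++ lift v :=
  List.map_append ..

noncomputable def rulesList (G : RCG N T) : List (Rl N T) :=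
  G.fin.toFinset.toList.filter (fun r => decide (r.2.2.1.Finite))

lemma mem_rulesList (G : RCG N T) {r : Rl N T} :
    r ∈ rulesList G ↔ r ∈ G.rules ∧ r.2.2.1.Finite := by
  simp [rulesList, List.mem_filter, Set.Finite.mem_toFinset]

noncomputable def perList (G : RCG N T) (r : Rl N T) : List N :=
  if h : r.2.2.1.Finite then h.toFinset.toList else []

lemma mem_perList (G : RCG N T) {r : Rl N T} (hf : r.2.2.1.Finite) {B : N} :
    B ∈ perList G r ↔ B ∈ r.2.2.1 := by
  simp [perList, dif_pos hf, Set.Finite.mem_toFinset]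

noncomputable def reachN (G : RCG N T) : List N :=
  G.start :: (rulesList G).flatMap (fun r => r.2.1.filterMap (fun s => s.getLeft?))

noncomputable def forList (G : RCG N T) (r : Rl N T) : List N :=
  (reachN G).filter (fun B => decide (B ∈ r.2.2.2))

lemma mem_forList (G : RCG N T) {r : Rl N T} {B : N} :
    B ∈ forList G r ↔ B ∈ reachN G ∧ B ∈ r.2.2.2 := by
  simp [forList, List.mem_filter]

noncomputable def kk (G : RCG N T) (r : Rl N T) : ℕ := (perList G r).length
noncomputable def ll (G : RCG N T) (r : Rl N T) : ℕ := (forList G r).length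

noncomputable def condN (r : Rl N T) (B : N) : NN N T := if B = r.1 then .inr (.pk r) else .inl B

def trapP (m : Mk N T) : PermProd (NN N T) T := (Sum.inr m, [nt Mk.F], ∅)

noncomputable def allMk (G : RCG N T) : List (Mk N T) :=
  (rulesList G).flatMap (fun r => .pk r :: .m2 r ::
    ((List.range (kk G r + 1)).map (.dd r) ++ (List.range (ll G r)).map (fun j => .ee r (j+1))))

noncomputable def traps (G : RCG N T) (ex : List (Mk N T)) : Set (PermProd (NN N T) T) :=
  {q | ∃ m, m ∈ allMk G ∧ m ∉ ex ∧ q = trapP m}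

noncomputable def eMk (G : RCG N T) (r : Rl N T) (j : ℕ) : Mk N T :=
  if j = 0 then .dd r (kk G r) else .ee r j

noncomputable def lastMk (G : RCG N T) (r : Rl N T) : Mk N T := eMk G r (ll G r)

noncomputable def Csel (G : RCG N T) (r : Rl N T) : Set (PermProd (NN N T) T) :=
  {(Sum.inl r.1, [nt (.m2 r)], ∅),
   (Sum.inl r.1, [nt (.pk r)], {Sum.inr (.m2 r)}),
   (Sum.inr (.m2 r), [nt .F], {Sum.inr (.m2 r)})} ∪ traps G [.pk r, .m2 r]

noncomputable def Cchain (G : RCG N T) (r : Rl N T) : Set (PermProd (NN N T) T) :=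
  {(Sum.inr (.m2 r), [nt (.dd r 0)], ∅)} ∪
  (fun i => ((Sum.inr (.dd r i) : NN N T), [nt (.dd r (i+1))],
      ({condN r ((perList G r).getD i r.1)} : Set (NN N T)))) '' {i | i < kk G r} ∪
  traps G ([.pk r, .m2 r] ++ (List.range (kk G r + 1)).map (.dd r))

noncomputable def Cforb (G : RCG N T) (r : Rl N T) (j : ℕ) : Set (PermProd (NN N T) T) :=
  {(Sum.inr (eMk G r j), [nt (.ee r (j+1))], ∅),
   (Sum.inr (.ee r (j+1)), [nt .F], {condN r ((forList G r).getD j r.1)})} ∪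
  traps G [.pk r, eMk G r j, .ee r (j+1)]

noncomputable def Crepl (G : RCG N T) (r : Rl N T) : Set (PermProd (NN N T) T) :=
  {(Sum.inr (lastMk G r), lift r.2.1, ∅), (Sum.inr (.pk r), [pl r.1], ∅)} ∪
  traps G [.pk r, lastMk G r]

noncomputable def dummyC (G : RCG N T) : Set (PermProd (NN N T) T) :=
  {(Sum.inr (.ee (G.start, [], ∅, ∅) 0), [nt .F], ∅)}

noncomputable def comps (G : RCG N T) : List (Set (PermProd (NN N T) T)) :=
  dummyC G :: (rulesList G).flatMap (fun r =>
    Csel G r :: Cchain G r :: ((List.range (ll G r)).map (Cforb G r) ++ [Crepl G r]))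

end RCCD

namespace RCCD
set_option linter.unusedVariables false
open List Relation

variable {N T : Type}

@[simp] lemma mem_alph {α : Type} {a : α} {w : List α} : a ∈ alph w ↔ a ∈ w := Iff.rfl

/-- Splitting a `Forall₂` along an append on the right. -/
lemma f2_split {α β : Type} {R : α → β → Prop} :
    ∀ {u v : List β} {l : List α}, Forall₂ R l (u ++ v) →
      ∃ l₁ l₂, l = l₁ ++ l₂ ∧ Forall₂ R l₁ u ∧ Forall₂ R l₂ v := by
  intro u
  induction u with
  | nil => exact fun h => ⟨[], _, rfl, Forall₂.nil, h⟩
  | cons b u ih =>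
    intro v l h
    rcases List.forall₂_cons_right_iff.1 h with ⟨a, l', hR, h2, rfl⟩
    rcases ih h2 with ⟨l₁, l₂, rfl, hu, hv⟩
    exact ⟨a :: l₁, l₂, rfl, Forall₂.cons hR hu, hv⟩

lemma f2_split3 {α β : Type} {R : α → β → Prop} {u v : List β} {c : β} {l : List α}
    (h : Forall₂ R l (u ++ c :: v)) :
    ∃ l₁ a l₂, l = l₁ ++ a :: l₂ ∧ Forall₂ R l₁ u ∧ R a c ∧ Forall₂ R l₂ v := by
  rcases f2_split h with ⟨l₁, l₂, rfl, hu, hv⟩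
  rcases List.forall₂_cons_right_iff.1 hv with ⟨a, l', hR, h2, rfl⟩
  exact ⟨l₁, a, l', rfl, hu, hR, h2⟩

lemma f2_app {α β : Type} {R : α → β → Prop} {l₁ l₂ u v}
    (h₁ : Forall₂ R l₁ u) (h₂ : Forall₂ R l₂ v) : Forall₂ R (l₁ ++ l₂) (u ++ v) :=
  List.rel_append h₁ h₂

/-- Unique decomposition at the unique occurrence of `c`. -/
lemma single_decomp {α : Type} {c : α} :
    ∀ {a u b v : List α}, a ++ c :: b = u ++ c :: v → c ∉ a → c ∉ b → a = u ∧ b = v := by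
  intro a
  induction a with
  | nil =>
    intro u b v h ha hb
    cases u with
    | nil => simpa using h
    | cons x u =>
      simp only [nil_append, cons_append, List.cons.injEq] at h
      exfalso; apply hb; rw [h.2]; exact mem_append_right _ (mem_cons_self)
  | cons x a ih =>
    intro u b v h ha hb
    cases u with
    | nil =>
      simp only [nil_append, cons_append, List.cons.injEq] at h
      exact absurd (h.1 ▸ mem_cons_self) ha
    | cons y u =>
      simp only [cons_append, List.cons.injEq] at h
      obtain ⟨rfl, h⟩ := h
      have := ih h (fun hc => ha (mem_cons_of_mem _ hc)) hb
      exact ⟨by rw [this.1], this.2⟩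

/-- A component is applicable to `s`. -/
def Appl (P : Set (PermProd (NN N T) T)) (s : List (Sy N T)) : Prop := ∃ t, PStep P s t

lemma tstep_first {P : Set (PermProd (NN N T) T)} {s s' : List (Sy N T)}
    (h : TStep P s s') : ∃ t, PStep P s t ∧ ReflTransGen (PStep P) t s' :=
  Relation.TransGen.head'_iff.1 h.1

lemma no_appl_no_tstep {P : Set (PermProd (NN N T) T)} {s s' : List (Sy N T)}
    (h : ¬ Appl P s) : ¬ TStep P s s' := by
  intro ht; rcases tstep_first ht with ⟨t, h1, -⟩; exact h ⟨t, h1⟩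

lemma rtg_stuck {P : Set (PermProd (NN N T) T)} {s s' : List (Sy N T)}
    (h : ReflTransGen (PStep P) s s') (hs : ¬ Appl P s) : s' = s := by
  rcases h.cases_head with h | ⟨c, hc, -⟩
  · exact h.symm
  · exact absurd ⟨c, hc⟩ hs

/-- `F` is never erased (given that no production rewrites `F`). -/
lemma F_persists {P : Set (PermProd (NN N T) T)}
    (hF : ∀ q ∈ P, q.1 ≠ Sum.inr Mk.F) {s t : List (Sy N T)}
    (h : PStep P s t) (hmem : nt Mk.F ∈ s) : nt Mk.F ∈ t := by
  rcases h with ⟨A, x, Per, u, v, hq, rfl, rfl, -⟩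
  rcases List.mem_append.1 hmem with h | h
  · exact mem_append_left _ (mem_append_left _ h)
  · rcases List.mem_cons.1 h with h | h
    · exfalso
      have : A = Sum.inr Mk.F := by
        have := h.symm; simpa [nt] using this
      exact hF _ hq this
    · exact mem_append_right (u ++ x) h

lemma F_persists_rtg {P : Set (PermProd (NN N T) T)}
    (hF : ∀ q ∈ P, q.1 ≠ Sum.inr Mk.F) {s t : List (Sy N T)}
    (h : ReflTransGen (PStep P) s t) (hmem : nt Mk.F ∈ s) : nt Mk.F ∈ t := by
  induction h with
  | refl => exact hmem
  | tail _ hstep ih => exact F_persists hF hstep ih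

/-- The trap lemma: a maximal derivation from a string containing a trapped
marker `M` ends with `F` present. -/
lemma trap_tstep {G : RCG N T} {P : Set (PermProd (NN N T) T)} {M : Mk N T}
    {s s' : List (Sy N T)}
    (hF : ∀ q ∈ P, q.1 ≠ Sum.inr Mk.F)
    (htrap : trapP M ∈ P)
    (hM : ∀ q ∈ P, q.1 = Sum.inr M → nt Mk.F ∈ q.2.1)
    (hmem : nt M ∈ s) (h : TStep P s s') : nt Mk.F ∈ s' := by
  have key : ∀ {t t' : List (Sy N T)}, PStep P t t' →
      (nt Mk.F ∈ t ∨ nt M ∈ t) → (nt Mk.F ∈ t' ∨ nt M ∈ t') := by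
    rintro t t' ⟨A, x, Per, u, v, hq, rfl, rfl, hPer⟩ hin
    rcases hin with hin | hin
    · left; exact F_persists hF ⟨A, x, Per, u, v, hq, rfl, rfl, hPer⟩ hin
    · rcases List.mem_append.1 hin with h | h
      · right; exact mem_append_left _ (mem_append_left _ h)
      · rcases List.mem_cons.1 h with h | h
        · left
          have hA : A = Sum.inr M := by simpa [nt] using h.symm
          exact mem_append_left _ (mem_append_right _ (hM _ hq hA))
        · right; exact mem_append_right (u ++ x) h
  have inv : nt Mk.F ∈ s' ∨ nt M ∈ s' := by
    have : ∀ {t t'}, ReflTransGen (PStep P) t t' →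
        (nt Mk.F ∈ t ∨ nt M ∈ t) → (nt Mk.F ∈ t' ∨ nt M ∈ t') := by
      intro t t' hrtg
      induction hrtg with
      | refl => exact id
      | tail _ hstep ih => exact fun h0 => key hstep (ih h0)
    exact this h.1.to_reflTransGen (Or.inr hmem)
  rcases inv with h1 | h1
  · exact h1
  · exfalso
    rcases List.append_of_mem h1 with ⟨a, b, hab⟩
    exact h.2 (a ++ [nt Mk.F] ++ b)
      ⟨Sum.inr M, [nt Mk.F], ∅, a, b, htrap, by simpa [nt] using hab, rfl, by simp⟩

/-! ### membership facts -/

lemma F_not_mem_allMk (G : RCG N T) : Mk.F ∉ allMk G := by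
  simp only [allMk, List.mem_flatMap, List.mem_cons, List.mem_append, List.mem_map,
    List.mem_range]
  rintro ⟨r, -, h | h | ⟨i, -, h⟩ | ⟨j, -, h⟩⟩ <;> cases h

lemma pk_mem_allMk {G : RCG N T} {r : Rl N T} (hr : r ∈ rulesList G) :
    Mk.pk r ∈ allMk G := by
  simp only [allMk, List.mem_flatMap]; exact ⟨r, hr, by simp⟩

lemma m2_mem_allMk {G : RCG N T} {r : Rl N T} (hr : r ∈ rulesList G) :
    Mk.m2 r ∈ allMk G := by
  simp only [allMk, List.mem_flatMap]; exact ⟨r, hr, by simp⟩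

lemma dd_mem_allMk {G : RCG N T} {r : Rl N T} (hr : r ∈ rulesList G) {i : ℕ}
    (hi : i ≤ kk G r) : Mk.dd r i ∈ allMk G := by
  simp only [allMk, List.mem_flatMap]
  exact ⟨r, hr, by simp only [List.mem_cons, List.mem_append, List.mem_map, List.mem_range]
    <;> exact Or.inr (Or.inr (Or.inl ⟨i, Nat.lt_succ_of_le hi, rfl⟩))⟩

lemma ee_mem_allMk {G : RCG N T} {r : Rl N T} (hr : r ∈ rulesList G) {j : ℕ}
    (h1 : 1 ≤ j) (h2 : j ≤ ll G r) : Mk.ee r j ∈ allMk G := by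
  simp only [allMk, List.mem_flatMap]
  refine ⟨r, hr, ?_⟩
  simp only [List.mem_cons, List.mem_append, List.mem_map, List.mem_range]
  exact Or.inr (Or.inr (Or.inr ⟨j - 1, by omega, by congr 1; omega⟩))

lemma eMk_ne_F {G : RCG N T} {r : Rl N T} {j : ℕ} : eMk G r j ≠ Mk.F := by
  unfold eMk; split <;> simp

lemma lastMk_ne_F {G : RCG N T} {r : Rl N T} : lastMk G r ≠ Mk.F := eMk_ne_F

lemma eMk_mem_allMk {G : RCG N T} {r : Rl N T} (hr : r ∈ rulesList G) {j : ℕ}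
    (h2 : j ≤ ll G r) : eMk G r j ∈ allMk G := by
  unfold eMk
  split
  · exact dd_mem_allMk hr le_rfl
  · exact ee_mem_allMk hr (by omega) h2

lemma lastMk_mem_allMk {G : RCG N T} {r : Rl N T} (hr : r ∈ rulesList G) :
    lastMk G r ∈ allMk G := eMk_mem_allMk hr le_rfl

lemma mem_comps {G : RCG N T} {P : Set (PermProd (NN N T) T)} :
    P ∈ comps G ↔ P = dummyC G ∨ ∃ r ∈ rulesList G,
      P = Csel G r ∨ P = Cchain G r ∨ (∃ j < ll G r, P = Cforb G r j) ∨ P = Crepl G r := by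
  simp only [comps, List.mem_cons, List.mem_flatMap, List.mem_append, List.mem_map,
    List.mem_range, List.mem_singleton]
  constructor
  · rintro (h | ⟨r, hr, h⟩)
    · exact Or.inl h
    · refine Or.inr ⟨r, hr, ?_⟩
      rcases h with h | h | ⟨j, hj, h⟩ | h | h
      · exact Or.inl (by simp [h])
      · exact Or.inr (Or.inl (by simp [h]))
      · exact Or.inr (Or.inr (Or.inl ⟨j, hj, by simp [h]⟩))
      · exact Or.inr (Or.inr (Or.inr (by simp [h])))
      · simp at h
  · rintro (h | ⟨r, hr, h⟩)
    · exact Or.inl h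
    · refine Or.inr ⟨r, hr, ?_⟩
      rcases h with h | h | ⟨j, hj, h⟩ | h
      · exact Or.inl (by simp [h])
      · exact Or.inr (Or.inl (by simp [h]))
      · exact Or.inr (Or.inr (Or.inl ⟨j, hj, by simp [h]⟩))
      · exact Or.inr (Or.inr (Or.inr (Or.inl (by simp [h]))))

lemma traps_subset_shape {G : RCG N T} {ex : List (Mk N T)} {q : PermProd (NN N T) T}
    (h : q ∈ traps G ex) : ∃ m, m ∈ allMk G ∧ m ∉ ex ∧ q = trapP m := h

lemma mem_traps {G : RCG N T} {ex : List (Mk N T)} {m : Mk N T}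
    (h1 : m ∈ allMk G) (h2 : m ∉ ex) : trapP m ∈ traps G ex := ⟨m, h1, h2, rfl⟩

/-! ### no production rewrites `F` -/

lemma comps_no_F_lhs {G : RCG N T} {P : Set (PermProd (NN N T) T)} (hP : P ∈ comps G) :
    ∀ q ∈ P, q.1 ≠ Sum.inr Mk.F := by
  have htrap : ∀ ex, ∀ q ∈ traps G ex, q.1 ≠ Sum.inr Mk.F := by
    rintro ex q ⟨m, hm, -, rfl⟩ h
    simp only [trapP, Sum.inr.injEq] at h
    exact F_not_mem_allMk G (h ▸ hm)
  rcases mem_comps.1 hP with rfl | ⟨r, hr, rfl | rfl | ⟨j, hj, rfl⟩ | rfl⟩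
  · rintro q hq h
    simp only [dummyC, Set.mem_singleton_iff] at hq
    rw [hq] at h; simp at h
  · rintro q (hq | hq)
    · simp only [Set.mem_insert_iff, Set.mem_singleton_iff] at hq
      rcases hq with rfl | rfl | rfl <;> simp
    · exact htrap _ _ hq
  · rintro q ((hq | hq) | hq)
    · simp only [Set.mem_singleton_iff] at hq; rw [hq]; simp
    · rcases hq with ⟨i, -, rfl⟩; simp
    · exact htrap _ _ hq
  · rintro q (hq | hq)
    · simp only [Set.mem_insert_iff, Set.mem_singleton_iff] at hq
      rcases hq with rfl | rfl <;> simp [eMk_ne_F]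
    · exact htrap _ _ hq
  · rintro q (hq | hq)
    · simp only [Set.mem_insert_iff, Set.mem_singleton_iff] at hq
      rcases hq with rfl | rfl <;> simp [lastMk_ne_F]
    · exact htrap _ _ hq

/-! ### pointwise relations between original and simulated strings -/

def Rp (r : Rl N T) (a : Symb N T) (b : Sy N T) : Prop :=
  (b = emb a ∧ a ≠ Sum.inl r.1) ∨ (a = Sum.inl r.1 ∧ b = nt (Mk.pk r))

def Rsel (r : Rl N T) (a : Symb N T) (b : Sy N T) : Prop :=
  b = emb a ∨ (a = Sum.inl r.1 ∧ (b = nt (Mk.pk r) ∨ b = nt (Mk.m2 r)))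

def Rrep (r : Rl N T) (a : Symb N T) (b : Sy N T) : Prop :=
  b = emb a ∨ (a = Sum.inl r.1 ∧ b = nt (Mk.pk r))

lemma Rp_imp_Rsel {r : Rl N T} {a b} (h : Rp r a b) : Rsel r a b := by
  rcases h with ⟨rfl, -⟩ | ⟨rfl, rfl⟩
  · exact Or.inl rfl
  · exact Or.inr ⟨rfl, Or.inl rfl⟩

lemma Rp_imp_Rrep {r : Rl N T} {a b} (h : Rp r a b) : Rrep r a b := by
  rcases h with ⟨rfl, -⟩ | ⟨rfl, rfl⟩
  · exact Or.inl rfl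
  · exact Or.inr ⟨rfl, rfl⟩

lemma f2_mem_right {α β : Type} {R : α → β → Prop} {l : List α} {l' : List β}
    (h : List.Forall₂ R l l') {b : β} (hb : b ∈ l') : ∃ a ∈ l, R a b := by
  induction h with
  | nil => simp at hb
  | cons hR h ih =>
    rcases List.mem_cons.1 hb with rfl | hb
    · exact ⟨_, mem_cons_self, hR⟩
    · rcases ih hb with ⟨a, ha, hr⟩; exact ⟨a, mem_cons_of_mem _ ha, hr⟩

lemma f2_mem_left {α β : Type} {R : α → β → Prop} {l : List α} {l' : List β}
    (h : List.Forall₂ R l l') {a : α} (ha : a ∈ l) : ∃ b ∈ l', R a b := by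
  induction h with
  | nil => simp at ha
  | cons hR h ih =>
    rcases List.mem_cons.1 ha with rfl | ha
    · exact ⟨_, mem_cons_self, hR⟩
    · rcases ih ha with ⟨b, hb, hr⟩; exact ⟨b, mem_cons_of_mem _ hb, hr⟩

lemma Rp_no_mark {r : Rl N T} {u : List (Symb N T)} {W : List (Sy N T)}
    (h : List.Forall₂ (Rp r) u W) {m : Mk N T} (hm : m ≠ Mk.pk r) : nt m ∉ W := by
  intro hmem
  rcases f2_mem_right h hmem with ⟨a, -, ⟨hb, -⟩ | ⟨-, hb⟩⟩
  · exact nt_ne_emb m a hb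
  · exact hm (by simpa [nt] using hb)

lemma Rp_no_A {r : Rl N T} {u : List (Symb N T)} {W : List (Sy N T)}
    (h : List.Forall₂ (Rp r) u W) : pl r.1 ∉ W := by
  intro hmem
  rcases f2_mem_right h hmem with ⟨a, -, ⟨hb, hne⟩ | ⟨-, hb⟩⟩
  · apply hne
    cases a with
    | inl C =>
      have : r.1 = C := by simpa [pl, emb] using hb
      rw [this]
    | inr t => simp [pl, emb] at hb
  · simp [pl, nt] at hb

/-- `condN` membership translates along `Rp`. -/
lemma Rp_cond_mem {r : Rl N T} {u : List (Symb N T)} {W : List (Sy N T)}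
    (h : List.Forall₂ (Rp r) u W) (B : N) :
    Sum.inl (condN r B) ∈ W ↔ Sum.inl B ∈ u := by
  unfold condN
  split
  case isTrue hB =>
    subst hB
    constructor
    · intro hmem
      rcases f2_mem_right h hmem with ⟨a, ha, ⟨hb, -⟩ | ⟨rfl, -⟩⟩
      · exact absurd hb (by cases a <;> simp [nt, emb, pl])
      · exact ha
    · intro hmem
      rcases f2_mem_left h hmem with ⟨b, hb, ⟨-, hne⟩ | ⟨-, rfl⟩⟩
      · exact absurd rfl hne
      · exact hb
  case isFalse hB =>
    constructor
    · intro hmem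
      rcases f2_mem_right h hmem with ⟨a, ha, ⟨hb, -⟩ | ⟨-, hb⟩⟩
      · cases a
        · next C =>
          have : B = C := by simpa [emb, pl] using hb
          exact this ▸ ha
        · simp [emb] at hb
      · simp [nt] at hb
    · intro hmem
      rcases f2_mem_left h hmem with ⟨b, hb, ⟨rfl, -⟩ | ⟨ha, -⟩⟩
      · exact hb
      · exact absurd (by simpa using ha) hB

lemma Rsel_to_Rp {r : Rl N T} {u : List (Symb N T)} {W : List (Sy N T)}
    (h : List.Forall₂ (Rsel r) u W) (hA : pl r.1 ∉ W) (hm2 : nt (Mk.m2 r) ∉ W) :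
    List.Forall₂ (Rp r) u W := by
  induction h with
  | nil => exact Forall₂.nil
  | cons hR h ih =>
    next a b l l' =>
    have hA' : pl r.1 ∉ l' := fun hc => hA (mem_cons_of_mem _ hc)
    have hm2' : nt (Mk.m2 r) ∉ l' := fun hc => hm2 (mem_cons_of_mem _ hc)
    refine Forall₂.cons ?_ (ih hA' hm2')
    rcases hR with rfl | ⟨rfl, rfl | rfl⟩
    · left
      refine ⟨rfl, fun hc => hA ?_⟩
      subst hc; exact mem_cons_self
    · exact Or.inr ⟨rfl, rfl⟩
    · exact absurd (mem_cons_self) hm2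

lemma Rrep_collapse {r : Rl N T} {u : List (Symb N T)} {W : List (Sy N T)}
    (h : List.Forall₂ (Rrep r) u W) (hp : nt (Mk.pk r) ∉ W) : W = lift u := by
  induction h with
  | nil => rfl
  | cons hR h ih =>
    next a b l l' =>
    have hp' : nt (Mk.pk r) ∉ l' := fun hc => hp (mem_cons_of_mem _ hc)
    rcases hR with rfl | ⟨rfl, rfl⟩
    · simp [lift] at ih ⊢; exact ih hp'
    · exact absurd (mem_cons_self) hp

lemma f2_lift {R : Symb N T → Sy N T → Prop} (hR : ∀ a, R a (emb a)) (s : List (Symb N T)) :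
    List.Forall₂ R s (lift s) := by
  induction s with
  | nil => exact Forall₂.nil
  | cons a s ih => exact Forall₂.cons (hR a) ih

/-- decomposing a lifted string at a symbol. -/
lemma lift_decomp {s₀ : List (Symb N T)} {u' v' : List (Sy N T)} {c : Sy N T}
    (h : lift s₀ = u' ++ c :: v') :
    ∃ a y b, s₀ = a ++ y :: b ∧ u' = lift a ∧ c = emb y ∧ v' = lift b := by
  rcases List.map_eq_append_iff.1 h with ⟨a, b', hs, hu, hb⟩
  cases b' with
  | nil => simp at hb
  | cons y b =>
    simp only [List.map_cons, List.cons.injEq] at hb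
    exact ⟨a, y, b, hs, hu.symm, hb.1.symm, hb.2.symm⟩

/-- Two decompositions at distinct symbols. -/
lemma two_decomp {α : Type} {c c₀ : α} (hne : c ≠ c₀) :
    ∀ {Y₁ Y₂ u' v' : List α}, Y₁ ++ c₀ :: Y₂ = u' ++ c :: v' →
      (∃ a b, Y₁ = a ++ c :: b ∧ u' = a ∧ v' = b ++ c₀ :: Y₂) ∨
      (∃ a b, Y₂ = a ++ c :: b ∧ u' = Y₁ ++ c₀ :: a ∧ v' = b) := by
  intro Y₁
  induction Y₁ with
  | nil =>
    intro Y₂ u' v' h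
    cases u' with
    | nil =>
      simp only [nil_append, List.cons.injEq] at h
      exact absurd h.1.symm hne
    | cons z u =>
      simp only [nil_append, cons_append, List.cons.injEq] at h
      obtain ⟨rfl, h⟩ := h
      exact Or.inr ⟨u, v', h, by simp, rfl⟩
  | cons z Y₁ ih =>
    intro Y₂ u' v' h
    cases u' with
    | nil =>
      simp only [cons_append, nil_append, List.cons.injEq] at h
      obtain ⟨rfl, h⟩ := h
      exact Or.inl ⟨[], Y₁, rfl, rfl, by simp [h.symm]⟩
    | cons w u =>
      simp only [cons_append, List.cons.injEq] at h
      obtain ⟨rfl, h⟩ := h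
      rcases ih h with ⟨a, b, h1, h2, h3⟩ | ⟨a, b, h1, h2, h3⟩
      · exact Or.inl ⟨z :: a, b, by simp [h1], by simp [h2], h3⟩
      · exact Or.inr ⟨a, b, h1, by simp [h2], h3⟩

lemma mem_of_decomp {α : Type} {s u' v' : List α} {c a : α}
    (h : s = u' ++ c :: v') (ha : a ∈ u' ++ v') : a ∈ s := by
  subst h
  rcases List.mem_append.1 ha with h | h
  · exact mem_append_left _ h
  · exact mem_append_right _ (mem_cons_of_mem _ h)

lemma lhs_mem {α : Type} {s u' v' : List α} {c : α} (h : s = u' ++ c :: v') : c ∈ s := by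
  subst h; exact mem_append_right _ (mem_cons_self)
/-! ### derivability in `G` and the reachable-nonterminal invariant -/

def GRd (G : RCG N T) (s₀ : List (Symb N T)) : Prop :=
  Relation.ReflTransGen (G.Step false) [Sum.inl G.start] s₀

lemma per_finite_of_cond {Per : Set N} {u v : List (Symb N T)}
    (hper : ∀ B ∈ Per, Sum.inl B ∈ alph (u ++ v)) : Per.Finite := by
  have : Per ⊆ Sum.inl ⁻¹' {a | a ∈ u ++ v} := fun B hB => hper B hB
  exact (((u ++ v).finite_toSet).preimage Sum.inl_injective.injOn).subset this

lemma step_rule_mem {G : RCG N T} {A : N} {x : List (Symb N T)} {Per For : Set N}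
    {u v : List (Symb N T)}
    (hrule : (A, x, Per, For) ∈ G.rules)
    (hper : ∀ B ∈ Per, Sum.inl B ∈ alph (u ++ v)) :
    ((A, x, Per, For) : Rl N T) ∈ rulesList G :=
  (mem_rulesList G).2 ⟨hrule, per_finite_of_cond hper⟩

lemma NTsub {G : RCG N T} {s₀ : List (Symb N T)} (h : GRd G s₀) :
    ∀ B : N, Sum.inl B ∈ s₀ → B ∈ reachN G := by
  induction h with
  | refl =>
    intro B hB
    simp only [List.mem_singleton, Sum.inl.injEq] at hB
    subst hB; rw [reachN]; exact mem_cons_self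
  | tail _ hstep ih =>
    rcases hstep with ⟨A, x, Per, For, u, v, hrule, rfl, rfl, hper, -⟩
    intro B hB
    rcases List.mem_append.1 hB with hB | hB
    · rcases List.mem_append.1 hB with hB | hB
      · exact ih B (mem_append_left _ hB)
      · -- B occurs in x
        rw [reachN]
        refine mem_cons_of_mem _ ?_
        simp only [List.mem_flatMap]
        refine ⟨(A, x, Per, For), step_rule_mem hrule hper, ?_⟩
        simp only [List.mem_filterMap]
        exact ⟨Sum.inl B, hB, rfl⟩
    · exact ih B (mem_append_right _ (mem_cons_of_mem _ hB))

/-! ### applicability helpers -/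

lemma appl_dest {P : Set (PermProd (NN N T) T)} {s : List (Sy N T)} (h : Appl P s) :
    ∃ q ∈ P, ∃ u' v', s = u' ++ Sum.inl q.1 :: v' ∧
      ∀ B ∈ q.2.2, Sum.inl B ∈ alph (u' ++ v') := by
  rcases h with ⟨t, A, x, Per, u, v, hq, h1, -, h4⟩
  exact ⟨(A, x, Per), hq, u, v, h1, h4⟩

lemma appl_make {P : Set (PermProd (NN N T) T)} {s : List (Sy N T)}
    {q : PermProd (NN N T) T} (hq : q ∈ P) {u' v'}
    (h1 : s = u' ++ Sum.inl q.1 :: v')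
    (h2 : ∀ B ∈ q.2.2, Sum.inl B ∈ alph (u' ++ v')) : Appl P s :=
  ⟨u' ++ q.2.1 ++ v', q.1, q.2.1, q.2.2, u', v', hq, h1, rfl, h2⟩

/-! ### trap packages: foreign markers lead to `F` -/

lemma pack_traps {G : RCG N T} {ex : List (Mk N T)} {q : PermProd (NN N T) T}
    (hq : q ∈ traps G ex) {M : Mk N T} : q.1 = Sum.inr M → nt Mk.F ∈ q.2.1 := by
  rcases hq with ⟨m, -, -, rfl⟩
  intro; simp [trapP]

lemma pack_Csel {G : RCG N T} {r : Rl N T} {M : Mk N T} (hM : M ∈ allMk G)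
    (h1 : M ≠ Mk.pk r) (h2 : M ≠ Mk.m2 r) :
    trapP M ∈ Csel G r ∧ ∀ q ∈ Csel G r, q.1 = Sum.inr M → nt Mk.F ∈ q.2.1 := by
  refine ⟨Or.inr (mem_traps hM (by simp [h1, h2])), ?_⟩
  rintro q (hq | hq)
  · simp only [Set.mem_insert_iff, Set.mem_singleton_iff] at hq
    rcases hq with rfl | rfl | rfl <;> intro h <;> simp_all
  · exact pack_traps hq

lemma pack_Cchain {G : RCG N T} {r : Rl N T} {M : Mk N T} (hM : M ∈ allMk G)
    (h1 : M ≠ Mk.pk r) (h2 : M ≠ Mk.m2 r) (h3 : ∀ i, M ≠ Mk.dd r i) :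
    trapP M ∈ Cchain G r ∧ ∀ q ∈ Cchain G r, q.1 = Sum.inr M → nt Mk.F ∈ q.2.1 := by
  refine ⟨Or.inr (mem_traps hM ?_), ?_⟩
  · intro hmem
    simp only [List.mem_append, List.mem_cons, List.mem_map, List.mem_range,
      List.not_mem_nil, or_false] at hmem
    rcases hmem with (h | h) | ⟨i, -, h⟩
    · exact h1 h
    · exact h2 h
    · exact h3 i h.symm
  · rintro q ((hq | hq) | hq)
    · simp only [Set.mem_singleton_iff] at hq
      subst hq; intro h; simp only [Sum.inr.injEq] at h; exact absurd h.symm h2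
    · rcases hq with ⟨i, -, rfl⟩
      intro h; simp only [Sum.inr.injEq] at h; exact absurd h.symm (h3 i)
    · exact pack_traps hq

lemma pack_Cforb {G : RCG N T} {r : Rl N T} {j : ℕ} {M : Mk N T} (hM : M ∈ allMk G)
    (h1 : M ≠ Mk.pk r) (h2 : M ≠ eMk G r j) (h3 : M ≠ Mk.ee r (j+1)) :
    trapP M ∈ Cforb G r j ∧ ∀ q ∈ Cforb G r j, q.1 = Sum.inr M → nt Mk.F ∈ q.2.1 := by
  refine ⟨Or.inr (mem_traps hM (by simp [h1, h2, h3])), ?_⟩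
  rintro q (hq | hq)
  · simp only [Set.mem_insert_iff, Set.mem_singleton_iff] at hq
    rcases hq with rfl | rfl
    · intro h; simp only [Sum.inr.injEq] at h; exact absurd h.symm h2
    · intro; simp
  · exact pack_traps hq

lemma pack_Crepl {G : RCG N T} {r : Rl N T} {M : Mk N T} (hM : M ∈ allMk G)
    (h1 : M ≠ Mk.pk r) (h2 : M ≠ lastMk G r) :
    trapP M ∈ Crepl G r ∧ ∀ q ∈ Crepl G r, q.1 = Sum.inr M → nt Mk.F ∈ q.2.1 := by
  refine ⟨Or.inr (mem_traps hM (by simp [h1, h2])), ?_⟩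
  rintro q (hq | hq)
  · simp only [Set.mem_insert_iff, Set.mem_singleton_iff] at hq
    rcases hq with rfl | rfl
    · intro h; simp only [Sum.inr.injEq] at h; exact absurd h.symm h2
    · intro h; simp only [Sum.inr.injEq] at h; exact absurd h.symm h1
  · exact pack_traps hq

lemma foreign_F {G : RCG N T} {P : Set (PermProd (NN N T) T)} (hP : P ∈ comps G)
    {M : Mk N T}
    (pack : trapP M ∈ P ∧ ∀ q ∈ P, q.1 = Sum.inr M → nt Mk.F ∈ q.2.1)
    {s s' : List (Sy N T)} (hmem : nt M ∈ s) (h : TStep P s s') : nt Mk.F ∈ s' :=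
  trap_tstep (G := G) (comps_no_F_lhs hP) pack.1 pack.2 hmem h
/-! ### the global invariant -/

def passP (G : RCG N T) (r : Rl N T) (u v : List (Symb N T)) (i : ℕ) : Prop :=
  ∀ i' < i, Sum.inl ((perList G r).getD i' r.1) ∈ u ++ v

def fP (G : RCG N T) (r : Rl N T) (u v : List (Symb N T)) (i : ℕ) : Prop :=
  Sum.inl ((perList G r).getD i r.1) ∉ u ++ v

def fF (G : RCG N T) (r : Rl N T) (u v : List (Symb N T)) (j : ℕ) : Prop :=
  Sum.inl ((forList G r).getD j r.1) ∉ u ++ v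

def Stage (G : RCG N T) (t : List (Sy N T)) : Prop :=
  ∃ r, r ∈ rulesList G ∧ ∃ u v W₁ W₂, GRd G (u ++ Sum.inl r.1 :: v) ∧
    List.Forall₂ (Rp r) u W₁ ∧ List.Forall₂ (Rp r) v W₂ ∧
    ((t = W₁ ++ nt (Mk.m2 r) :: W₂) ∨
     (∃ i ≤ kk G r, t = W₁ ++ nt (Mk.dd r i) :: W₂ ∧ passP G r u v i ∧
        (i = kk G r ∨ fP G r u v i)) ∨
     (∃ j, 1 ≤ j ∧ j ≤ ll G r ∧ t = W₁ ++ nt (Mk.ee r j) :: W₂ ∧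
        passP G r u v (kk G r) ∧ ∀ j' < j, fF G r u v j'))

def Inv (G : RCG N T) (t : List (Sy N T)) : Prop :=
  nt Mk.F ∈ t ∨ (∃ s₀, t = lift s₀ ∧ GRd G s₀) ∨ Stage G t

lemma RpW_cond {r : Rl N T} {u v : List (Symb N T)} {W₁ W₂ : List (Sy N T)}
    (h1 : List.Forall₂ (Rp r) u W₁) (h2 : List.Forall₂ (Rp r) v W₂) (B : N) :
    Sum.inl (condN r B) ∈ W₁ ++ W₂ ↔ Sum.inl B ∈ u ++ v := by
  simp only [List.mem_append, Rp_cond_mem h1 B, Rp_cond_mem h2 B]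

lemma eq_inl_of_emb_eq_pl {y : Symb N T} {B : N} (h : pl B = emb y) : y = Sum.inl B := by
  cases y with
  | inl C =>
    have : B = C := by simpa [pl, emb] using h
    rw [this]
  | inr t => simp [pl, emb] at h

/-- memberships of the explicit productions -/
lemma q1_mem_Csel (G : RCG N T) (r : Rl N T) :
    ((Sum.inl r.1 : NN N T), [nt (Mk.m2 r)], (∅ : Set (NN N T))) ∈ Csel G r :=
  Or.inl (by simp)

lemma q2_mem_Csel (G : RCG N T) (r : Rl N T) :
    ((Sum.inl r.1 : NN N T), [nt (Mk.pk r)], ({Sum.inr (Mk.m2 r)} : Set (NN N T))) ∈ Csel G r :=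
  Or.inl (by simp)

lemma q3_mem_Csel (G : RCG N T) (r : Rl N T) :
    ((Sum.inr (Mk.m2 r) : NN N T), [nt Mk.F], ({Sum.inr (Mk.m2 r)} : Set (NN N T))) ∈ Csel G r :=
  Or.inl (by simp)

/-! ### Analysis A : `Csel` applied to a plain string -/

lemma csel_tstep {G : RCG N T} {r : Rl N T} (hr : r ∈ rulesList G)
    {s₀ : List (Symb N T)} (hGR : GRd G s₀) {t' : List (Sy N T)}
    (h : TStep (Csel G r) (lift s₀) t') : Inv G t' := by
  have hPmem : Csel G r ∈ comps G := mem_comps.2 (Or.inr ⟨r, hr, Or.inl rfl⟩)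
  have hPF := comps_no_F_lhs hPmem
  -- one-step preservation
  have hstep : ∀ {t t₂ : List (Sy N T)}, PStep (Csel G r) t t₂ →
      (nt Mk.F ∈ t ∨ (List.Forall₂ (Rsel r) s₀ t ∧ nt (Mk.m2 r) ∈ t)) →
      (nt Mk.F ∈ t₂ ∨ (List.Forall₂ (Rsel r) s₀ t₂ ∧ nt (Mk.m2 r) ∈ t₂)) := by
    rintro t t₂ hp hin
    rcases hin with hF | ⟨hf2, hm2⟩
    · exact Or.inl (F_persists hPF hp hF)
    rcases hp with ⟨A, x, Per, u', v', hq, rfl, rfl, hperm⟩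
    rcases hq with hq | hq
    · simp only [Set.mem_insert_iff, Set.mem_singleton_iff, Prod.mk.injEq] at hq
      rcases hq with ⟨rfl, rfl, rfl⟩ | ⟨rfl, rfl, rfl⟩ | ⟨rfl, rfl, rfl⟩
      · -- A → m2
        rcases f2_split3 hf2 with ⟨a, y, b, rfl, ha, hy, hb⟩
        have hyA : y = Sum.inl r.1 := by
          rcases hy with hy | ⟨rfl, -⟩
          · exact eq_inl_of_emb_eq_pl hy
          · rfl
        subst hyA
        refine Or.inr ⟨?_, ?_⟩
        · have : List.Forall₂ (Rsel r) (Sum.inl r.1 :: b) (nt (Mk.m2 r) :: v') :=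
            Forall₂.cons (Or.inr ⟨rfl, Or.inr rfl⟩) hb
          simpa using f2_app ha this
        · simp
      · -- A → pk
        rcases f2_split3 hf2 with ⟨a, y, b, rfl, ha, hy, hb⟩
        have hyA : y = Sum.inl r.1 := by
          rcases hy with hy | ⟨rfl, -⟩
          · exact eq_inl_of_emb_eq_pl hy
          · rfl
        subst hyA
        have hm2' : nt (Mk.m2 r) ∈ u' ++ v' := by
          have := List.mem_append.1 hm2
          rcases this with h' | h'
          · exact mem_append_left _ h'
          · rcases List.mem_cons.1 h' with h' | h'
            · exact absurd h' (by simp [nt, pl])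
            · exact mem_append_right _ h'
        refine Or.inr ⟨?_, ?_⟩
        · have : List.Forall₂ (Rsel r) (Sum.inl r.1 :: b) (nt (Mk.pk r) :: v') :=
            Forall₂.cons (Or.inr ⟨rfl, Or.inl rfl⟩) hb
          simpa using f2_app ha this
        · rcases List.mem_append.1 hm2' with h' | h'
          · exact mem_append_left _ (mem_append_left _ h')
          · exact mem_append_right _ h'
      · -- trap fires : F appears
        left; simp
    · -- foreign traps are not applicable
      exfalso
      obtain ⟨m, -, hex, heq2⟩ := hq
      simp only [trapP, Prod.mk.injEq] at heq2
      obtain ⟨rfl, rfl, rfl⟩ := heq2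
      have hmem : nt m ∈ u' ++ Sum.inl (Sum.inr m) :: v' :=
        mem_append_right _ (mem_cons_self)
      rcases f2_mem_right hf2 hmem with ⟨a, -, ha | ⟨-, ha | ha⟩⟩
      · exact nt_ne_emb m a ha
      · exact hex (by simp [nt] at ha; simp [ha])
      · exact hex (by simp [nt] at ha; simp [ha])
  -- first step
  obtain ⟨t₁, h1, h2⟩ := tstep_first h
  have hinit : List.Forall₂ (Rsel r) s₀ t₁ ∧ nt (Mk.m2 r) ∈ t₁ := by
    rcases h1 with ⟨A, x, Per, u', v', hq, heq, rfl, hperm⟩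
    rcases hq with hq | hq
    · simp only [Set.mem_insert_iff, Set.mem_singleton_iff, Prod.mk.injEq] at hq
      rcases hq with ⟨rfl, rfl, rfl⟩ | ⟨rfl, rfl, rfl⟩ | ⟨rfl, rfl, rfl⟩
      · rcases lift_decomp heq with ⟨a, y, b, rfl, rfl, hy, rfl⟩
        have hyA : y = Sum.inl r.1 := eq_inl_of_emb_eq_pl hy
        subst hyA
        constructor
        · have : List.Forall₂ (Rsel r) (Sum.inl r.1 :: b) (nt (Mk.m2 r) :: lift b) :=
            Forall₂.cons (Or.inr ⟨rfl, Or.inr rfl⟩) (f2_lift (fun a => Or.inl rfl) b)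
          simpa using f2_app (f2_lift (fun a => Or.inl rfl) a) this
        · simp
      · exfalso
        have := hperm (Sum.inr (Mk.m2 r)) rfl
        exact nt_not_mem_lift _ _ (heq ▸ mem_of_decomp rfl this)
      · exact absurd (heq ▸ lhs_mem rfl) (nt_not_mem_lift _ _)
    · obtain ⟨m, -, -, heq2⟩ := hq
      simp only [trapP, Prod.mk.injEq] at heq2
      obtain ⟨rfl, rfl, rfl⟩ := heq2
      exact absurd (heq ▸ lhs_mem rfl) (nt_not_mem_lift _ _)
  -- run invariant
  have hrun : ∀ {a b : List (Sy N T)}, ReflTransGen (PStep (Csel G r)) a b →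
      (nt Mk.F ∈ a ∨ (List.Forall₂ (Rsel r) s₀ a ∧ nt (Mk.m2 r) ∈ a)) →
      (nt Mk.F ∈ b ∨ (List.Forall₂ (Rsel r) s₀ b ∧ nt (Mk.m2 r) ∈ b)) := by
    intro a b hab
    induction hab with
    | refl => exact id
    | tail _ hs ih => exact fun h0 => hstep hs (ih h0)
  rcases hrun h2 (Or.inr hinit) with hF | ⟨hf2, hm2⟩
  · exact Or.inl hF
  · -- endpoint
    have hA : pl r.1 ∉ t' := by
      intro hmem
      rcases List.append_of_mem hmem with ⟨a, b, rfl⟩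
      exact h.2 _ ⟨Sum.inl r.1, [nt (Mk.m2 r)], ∅, a, b, q1_mem_Csel G r, rfl, rfl, by simp⟩
    rcases List.append_of_mem hm2 with ⟨W₁, W₂, rfl⟩
    have hu : nt (Mk.m2 r) ∉ W₁ ∧ nt (Mk.m2 r) ∉ W₂ := by
      constructor <;> intro hmem
      · exact h.2 _ ⟨Sum.inr (Mk.m2 r), [nt Mk.F], {Sum.inr (Mk.m2 r)}, W₁, W₂,
          q3_mem_Csel G r, rfl, rfl, by
            rintro B hB
            simp only [Set.mem_singleton_iff] at hB
            subst hB
            exact mem_alph.2 (mem_append_left _ hmem)⟩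
      · exact h.2 _ ⟨Sum.inr (Mk.m2 r), [nt Mk.F], {Sum.inr (Mk.m2 r)}, W₁, W₂,
          q3_mem_Csel G r, rfl, rfl, by
            rintro B hB
            simp only [Set.mem_singleton_iff] at hB
            subst hB
            exact mem_alph.2 (mem_append_right _ hmem)⟩
    rcases f2_split3 hf2 with ⟨a, y, b, rfl, ha, hy, hb⟩
    have hyA : y = Sum.inl r.1 := by
      rcases hy with hy | ⟨rfl, -⟩
      · exact absurd hy (nt_ne_emb _ _)
      · rfl
    subst hyA
    have hW₁ : List.Forall₂ (Rp r) a W₁ :=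
      Rsel_to_Rp ha (fun hc => hA (mem_append_left _ hc)) hu.1
    have hW₂ : List.Forall₂ (Rp r) b W₂ :=
      Rsel_to_Rp hb (fun hc => hA (mem_append_right _ (mem_cons_of_mem _ hc))) hu.2
    exact Or.inr (Or.inr ⟨r, hr, a, b, W₁, W₂, hGR, hW₁, hW₂, Or.inl rfl⟩)
lemma nt_inj {m m' : Mk N T} (h : nt m = nt m') : m = m' := by simpa [nt] using h

lemma stage_marks {r : Rl N T} {u v : List (Symb N T)} {W₁ W₂ : List (Sy N T)}
    (hW₁ : List.Forall₂ (Rp r) u W₁) (hW₂ : List.Forall₂ (Rp r) v W₂)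
    {M₀ m : Mk N T} (hm : nt m ∈ W₁ ++ nt M₀ :: W₂) : m = Mk.pk r ∨ m = M₀ := by
  by_cases hpk : m = Mk.pk r
  · exact Or.inl hpk
  rcases List.mem_append.1 hm with h | h
  · exact absurd h (Rp_no_mark hW₁ hpk)
  · rcases List.mem_cons.1 h with h | h
    · exact Or.inr (nt_inj h)
    · exact absurd h (Rp_no_mark hW₂ hpk)

lemma stage_decomp {r : Rl N T} {u v : List (Symb N T)} {W₁ W₂ u' v' : List (Sy N T)}
    (hW₁ : List.Forall₂ (Rp r) u W₁) (hW₂ : List.Forall₂ (Rp r) v W₂)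
    {M₀ : Mk N T} (hM : M₀ ≠ Mk.pk r)
    (heq : W₁ ++ nt M₀ :: W₂ = u' ++ nt M₀ :: v') : W₁ = u' ∧ W₂ = v' :=
  single_decomp heq (Rp_no_mark hW₁ hM) (Rp_no_mark hW₂ hM)

lemma q0_mem_Cchain (G : RCG N T) (r : Rl N T) :
    ((Sum.inr (Mk.m2 r) : NN N T), [nt (Mk.dd r 0)], (∅ : Set (NN N T))) ∈ Cchain G r :=
  Or.inl (Or.inl rfl)

lemma qi_mem_Cchain (G : RCG N T) (r : Rl N T) {i : ℕ} (hi : i < kk G r) :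
    ((Sum.inr (Mk.dd r i) : NN N T), [nt (Mk.dd r (i+1))],
      ({condN r ((perList G r).getD i r.1)} : Set (NN N T))) ∈ Cchain G r :=
  Or.inl (Or.inr ⟨i, hi, rfl⟩)

/-! ### Analysis B : `Cchain` applied to the `m2` stage -/

lemma cchain_tstep {G : RCG N T} {r : Rl N T} (hr : r ∈ rulesList G)
    {u v : List (Symb N T)} {W₁ W₂ t' : List (Sy N T)}
    (hGR : GRd G (u ++ Sum.inl r.1 :: v))
    (hW₁ : List.Forall₂ (Rp r) u W₁) (hW₂ : List.Forall₂ (Rp r) v W₂)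
    (h : TStep (Cchain G r) (W₁ ++ nt (Mk.m2 r) :: W₂) t') : Inv G t' := by
  -- run invariant
  set RI : List (Sy N T) → Prop := fun t =>
    ∃ i ≤ kk G r, t = W₁ ++ nt (Mk.dd r i) :: W₂ ∧ passP G r u v i with hRI
  have hstep : ∀ {t t₂ : List (Sy N T)}, PStep (Cchain G r) t t₂ → RI t → RI t₂ := by
    rintro t t₂ ⟨A, x, Per, u', v', hq, rfl, rfl, hperm⟩ ⟨i, hi, heq, hpass⟩
    rcases hq with (hq | hq) | hq
    · -- m2 → dd 0 : impossible, no m2 present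
      exfalso
      simp only [Set.mem_singleton_iff, Prod.mk.injEq] at hq
      obtain ⟨rfl, rfl, rfl⟩ := hq
      rcases stage_marks hW₁ hW₂ (lhs_mem heq.symm) with hc | hc <;> simp at hc
    · -- chain step
      obtain ⟨i', hi', hq⟩ := hq
      simp only [Prod.mk.injEq] at hq
      obtain ⟨rfl, rfl, rfl⟩ := hq
      have : Mk.dd r i' = Mk.pk r ∨ Mk.dd r i' = Mk.dd r i :=
        stage_marks hW₁ hW₂ (lhs_mem heq.symm)
      rcases this with hc | hc
      · simp at hc
      · simp only [Mk.dd.injEq] at hc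
        obtain ⟨-, rfl⟩ := hc
        obtain ⟨rfl, rfl⟩ := stage_decomp hW₁ hW₂ (by simp) heq.symm
        have hlt : i' < kk G r := hi'
        refine ⟨i' + 1, by omega, by simp, ?_⟩
        intro i'' hi''
        rcases Nat.lt_succ_iff_lt_or_eq.1 hi'' with h' | h'
        · exact hpass i'' h'
        · subst h'
          have := hperm _ rfl
          exact (RpW_cond hW₁ hW₂ _).1 this
    · -- traps : no trapped marker present
      exfalso
      obtain ⟨m, -, hex, heq2⟩ := hq
      simp only [trapP, Prod.mk.injEq] at heq2
      obtain ⟨rfl, rfl, rfl⟩ := heq2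
      rcases stage_marks hW₁ hW₂ (lhs_mem heq.symm) with hc | hc
      · subst hc; simp at hex
      · subst hc
        exact hex (List.mem_append_right _
          (List.mem_map.2 ⟨i, List.mem_range.2 (by omega), rfl⟩))
  -- first step
  obtain ⟨t₁, h1, h2⟩ := tstep_first h
  have hinit : RI t₁ := by
    rcases h1 with ⟨A, x, Per, u', v', hq, heq, rfl, hperm⟩
    rcases hq with (hq | hq) | hq
    · simp only [Set.mem_singleton_iff, Prod.mk.injEq] at hq
      obtain ⟨rfl, rfl, rfl⟩ := hq
      obtain ⟨rfl, rfl⟩ := stage_decomp hW₁ hW₂ (by simp) heq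
      exact ⟨0, Nat.zero_le _, by simp, fun i' hi' => absurd hi' (Nat.not_lt_zero _)⟩
    · exfalso
      obtain ⟨i', hi', hq⟩ := hq
      simp only [Prod.mk.injEq] at hq
      obtain ⟨rfl, rfl, rfl⟩ := hq
      rcases stage_marks hW₁ hW₂ (lhs_mem heq) with hc | hc <;> simp at hc
    · exfalso
      obtain ⟨m, -, hex, heq2⟩ := hq
      simp only [trapP, Prod.mk.injEq] at heq2
      obtain ⟨rfl, rfl, rfl⟩ := heq2
      rcases stage_marks hW₁ hW₂ (lhs_mem heq) with hc | hc <;>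
        (subst hc; simp at hex)
  have hrun : ∀ {a b : List (Sy N T)}, ReflTransGen (PStep (Cchain G r)) a b →
      RI a → RI b := by
    intro a b hab
    induction hab with
    | refl => exact id
    | tail _ hs ih => exact fun h0 => hstep hs (ih h0)
  obtain ⟨i, hi, rfl, hpass⟩ := hrun h2 hinit
  -- endpoint : the chain is stuck or complete
  have hstuck : i = kk G r ∨ fP G r u v i := by
    by_cases hik : i = kk G r
    · exact Or.inl hik
    right
    intro hmem
    exact h.2 _ ⟨Sum.inr (Mk.dd r i), [nt (Mk.dd r (i+1))],
      {condN r ((perList G r).getD i r.1)}, W₁, W₂,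
      qi_mem_Cchain G r (by omega), rfl, rfl, by
        rintro B hB
        simp only [Set.mem_singleton_iff] at hB
        subst hB
        exact mem_alph.2 ((RpW_cond hW₁ hW₂ _).2 hmem)⟩
  exact Or.inr (Or.inr ⟨r, hr, u, v, W₁, W₂, hGR, hW₁, hW₂,
    Or.inr (Or.inl ⟨i, hi, rfl, hpass, hstuck⟩)⟩)
lemma eMk_ne_pk {G : RCG N T} {r r' : Rl N T} {j : ℕ} : eMk G r j ≠ Mk.pk r' := by
  unfold eMk; split <;> simp

lemma eMk_ne_m2 {G : RCG N T} {r r' : Rl N T} {j : ℕ} : eMk G r j ≠ Mk.m2 r' := by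
  unfold eMk; split <;> simp

lemma eMk_ne_ee_succ {G : RCG N T} {r : Rl N T} {j : ℕ} : eMk G r j ≠ Mk.ee r (j+1) := by
  unfold eMk; split
  · simp
  · simp only [ne_eq, Mk.ee.injEq, not_and]; omega

lemma lastMk_ne_pk {G : RCG N T} {r r' : Rl N T} : lastMk G r ≠ Mk.pk r' := eMk_ne_pk

lemma qa_mem_Cforb (G : RCG N T) (r : Rl N T) (j : ℕ) :
    ((Sum.inr (eMk G r j) : NN N T), [nt (Mk.ee r (j+1))], (∅ : Set (NN N T))) ∈ Cforb G r j :=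
  Or.inl (by simp)

lemma qb_mem_Cforb (G : RCG N T) (r : Rl N T) (j : ℕ) :
    ((Sum.inr (Mk.ee r (j+1)) : NN N T), [nt Mk.F],
      ({condN r ((forList G r).getD j r.1)} : Set (NN N T))) ∈ Cforb G r j :=
  Or.inl (by simp)

/-! ### Analysis C : `Cforb` applied to its start marker -/

lemma cforb_tstep {G : RCG N T} {r : Rl N T} (hr : r ∈ rulesList G) {j : ℕ}
    (hj : j < ll G r) {u v : List (Symb N T)} {W₁ W₂ t' : List (Sy N T)}
    (hGR : GRd G (u ++ Sum.inl r.1 :: v))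
    (hW₁ : List.Forall₂ (Rp r) u W₁) (hW₂ : List.Forall₂ (Rp r) v W₂)
    (hpassk : passP G r u v (kk G r))
    (hfail : ∀ j' < j, fF G r u v j')
    (h : TStep (Cforb G r j) (W₁ ++ nt (eMk G r j) :: W₂) t') : Inv G t' := by
  have hPmem : Cforb G r j ∈ comps G :=
    mem_comps.2 (Or.inr ⟨r, hr, Or.inr (Or.inr (Or.inl ⟨j, hj, rfl⟩))⟩)
  have hPF := comps_no_F_lhs hPmem
  set RI : List (Sy N T) → Prop := fun t =>
    (t = W₁ ++ nt (Mk.ee r (j+1)) :: W₂) ∨ nt Mk.F ∈ t with hRI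
  have hstep : ∀ {t t₂ : List (Sy N T)}, PStep (Cforb G r j) t t₂ → RI t → RI t₂ := by
    rintro t t₂ hp hin
    rcases hin with rfl | hF
    swap
    · exact Or.inr (F_persists hPF hp hF)
    rcases hp with ⟨A, x, Per, u', v', hq, heq, rfl, hperm⟩
    rcases hq with hq | hq
    · simp only [Set.mem_insert_iff, Set.mem_singleton_iff, Prod.mk.injEq] at hq
      rcases hq with ⟨rfl, rfl, rfl⟩ | ⟨rfl, rfl, rfl⟩
      · exfalso
        rcases stage_marks hW₁ hW₂ (lhs_mem heq) with hc | hc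
        · exact eMk_ne_pk hc
        · exact eMk_ne_ee_succ hc
      · -- the forbidden-symbol trap fires
        right
        exact mem_append_left _ (mem_append_right _ (by simp))
    · exfalso
      obtain ⟨m, -, hex, heq2⟩ := hq
      simp only [trapP, Prod.mk.injEq] at heq2
      obtain ⟨rfl, rfl, rfl⟩ := heq2
      rcases stage_marks hW₁ hW₂ (lhs_mem heq) with hc | hc <;>
        (subst hc; simp at hex)
  obtain ⟨t₁, h1, h2⟩ := tstep_first h
  have hinit : RI t₁ := by
    rcases h1 with ⟨A, x, Per, u', v', hq, heq, rfl, hperm⟩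
    rcases hq with hq | hq
    · simp only [Set.mem_insert_iff, Set.mem_singleton_iff, Prod.mk.injEq] at hq
      rcases hq with ⟨rfl, rfl, rfl⟩ | ⟨rfl, rfl, rfl⟩
      · obtain ⟨rfl, rfl⟩ := stage_decomp hW₁ hW₂ eMk_ne_pk heq
        left; simp
      · exfalso
        rcases stage_marks hW₁ hW₂ (lhs_mem heq) with hc | hc
        · simp at hc
        · exact eMk_ne_ee_succ hc.symm
    · exfalso
      obtain ⟨m, -, hex, heq2⟩ := hq
      simp only [trapP, Prod.mk.injEq] at heq2
      obtain ⟨rfl, rfl, rfl⟩ := heq2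
      rcases stage_marks hW₁ hW₂ (lhs_mem heq) with hc | hc <;>
        (subst hc; simp at hex)
  have hrun : ∀ {a b : List (Sy N T)}, ReflTransGen (PStep (Cforb G r j)) a b →
      RI a → RI b := by
    intro a b hab
    induction hab with
    | refl => exact id
    | tail _ hs ih => exact fun h0 => hstep hs (ih h0)
  rcases hrun h2 hinit with rfl | hF
  swap
  · exact Or.inl hF
  -- endpoint : the forbidden symbol is absent
  have hfF : fF G r u v j := by
    intro hmem
    exact h.2 _ ⟨Sum.inr (Mk.ee r (j+1)), [nt Mk.F],
      {condN r ((forList G r).getD j r.1)}, W₁, W₂, qb_mem_Cforb G r j, rfl, rfl, by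
        rintro B hB
        simp only [Set.mem_singleton_iff] at hB
        subst hB
        exact mem_alph.2 ((RpW_cond hW₁ hW₂ _).2 hmem)⟩
  refine Or.inr (Or.inr ⟨r, hr, u, v, W₁, W₂, hGR, hW₁, hW₂,
    Or.inr (Or.inr ⟨j + 1, by omega, by omega, rfl, hpassk, ?_⟩)⟩)
  intro j' hj'
  rcases Nat.lt_succ_iff_lt_or_eq.1 hj' with h' | h'
  · exact hfail j' h'
  · subst h'; exact hfF

/-! ### Analysis D : `Crepl` applied to its start marker -/

lemma Rrep_no_mark {r : Rl N T} {u : List (Symb N T)} {W : List (Sy N T)}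
    (h : List.Forall₂ (Rrep r) u W) {m : Mk N T} (hm : m ≠ Mk.pk r) : nt m ∉ W := by
  intro hmem
  rcases f2_mem_right h hmem with ⟨a, -, hb | ⟨-, hb⟩⟩
  · exact nt_ne_emb m a hb
  · exact hm (nt_inj hb)

lemma qr_mem_Crepl (G : RCG N T) (r : Rl N T) :
    ((Sum.inr (lastMk G r) : NN N T), lift r.2.1, (∅ : Set (NN N T))) ∈ Crepl G r :=
  Or.inl (by simp)

lemma qp_mem_Crepl (G : RCG N T) (r : Rl N T) :
    ((Sum.inr (Mk.pk r) : NN N T), [pl r.1], (∅ : Set (NN N T))) ∈ Crepl G r :=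
  Or.inl (by simp)

lemma crepl_tstep {G : RCG N T} {r : Rl N T} (hr : r ∈ rulesList G)
    {u v : List (Symb N T)} {W₁ W₂ t' : List (Sy N T)}
    (hGR : GRd G (u ++ Sum.inl r.1 :: v))
    (hW₁ : List.Forall₂ (Rp r) u W₁) (hW₂ : List.Forall₂ (Rp r) v W₂)
    (hstep₀ : G.Step false (u ++ Sum.inl r.1 :: v) (u ++ r.2.1 ++ v))
    (h : TStep (Crepl G r) (W₁ ++ nt (lastMk G r) :: W₂) t') : Inv G t' := by
  set RI : List (Sy N T) → Prop := fun t =>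
    (∃ Y₁ Y₂, t = Y₁ ++ nt (lastMk G r) :: Y₂ ∧
      List.Forall₂ (Rrep r) u Y₁ ∧ List.Forall₂ (Rrep r) v Y₂) ∨
    List.Forall₂ (Rrep r) (u ++ r.2.1 ++ v) t with hRI
  have repl_y : ∀ {w : List (Symb N T)} {Y a b : List (Sy N T)},
      List.Forall₂ (Rrep r) w Y → Y = a ++ nt (Mk.pk r) :: b →
      List.Forall₂ (Rrep r) w (a ++ pl r.1 :: b) := by
    rintro w Y a b hY rfl
    rcases f2_split3 hY with ⟨a₀, y, b₀, rfl, ha, hy, hb⟩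
    have hyA : y = Sum.inl r.1 := by
      rcases hy with hy | ⟨rfl, -⟩
      · exact absurd hy (nt_ne_emb _ _)
      · rfl
    subst hyA
    exact f2_app ha (Forall₂.cons (Or.inl rfl) hb)
  have hstep : ∀ {t t₂ : List (Sy N T)}, PStep (Crepl G r) t t₂ → RI t → RI t₂ := by
    rintro t t₂ ⟨A, x, Per, u', v', hq, heq, rfl, hperm⟩ hin
    rcases hq with hq | hq
    · simp only [Set.mem_insert_iff, Set.mem_singleton_iff, Prod.mk.injEq] at hq
      rcases hq with ⟨rfl, rfl, rfl⟩ | ⟨rfl, rfl, rfl⟩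
      · -- lastMk → x
        rcases hin with ⟨Y₁, Y₂, rfl, hY₁, hY₂⟩ | hf2
        · obtain ⟨rfl, rfl⟩ := single_decomp heq
            (Rrep_no_mark hY₁ lastMk_ne_pk) (Rrep_no_mark hY₂ lastMk_ne_pk)
          right
          exact f2_app (f2_app hY₁ (f2_lift (fun a => Or.inl rfl) _)) hY₂
        · exfalso
          have hmem : nt (lastMk G r) ∈ t := lhs_mem heq
          rcases f2_mem_right hf2 hmem with ⟨a, -, hb | ⟨-, hb⟩⟩
          · exact nt_ne_emb _ a hb
          · exact lastMk_ne_pk (nt_inj hb)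
      · -- pk → A
        rcases hin with ⟨Y₁, Y₂, rfl, hY₁, hY₂⟩ | hf2
        · have hne : (nt (Mk.pk r) : Sy N T) ≠ nt (lastMk G r) := by
            simp only [nt, ne_eq, Sum.inl.injEq, Sum.inr.injEq]
            exact fun hc => lastMk_ne_pk hc.symm
          rcases two_decomp hne heq with ⟨a, b, hY, h2, h3⟩ | ⟨a, b, hY, h2, h3⟩
          · subst h2; subst h3
            left
            refine ⟨u' ++ pl r.1 :: b, Y₂, by simp, repl_y hY₁ hY, hY₂⟩
          · subst h2; subst h3
            left
            refine ⟨Y₁, a ++ pl r.1 :: v', by simp, hY₁, repl_y hY₂ hY⟩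
        · -- second kind
          right
          have hf2' : List.Forall₂ (Rrep r) (u ++ r.2.1 ++ v)
              (u' ++ Sum.inl (Sum.inr (Mk.pk r)) :: v') := heq ▸ hf2
          rcases f2_split3 hf2' with ⟨a₀, y, b₀, hw, ha, hy, hb⟩
          have hyA : y = Sum.inl r.1 := by
            rcases hy with hy | ⟨rfl, -⟩
            · exact absurd hy (nt_ne_emb _ _)
            · rfl
          subst hyA
          rw [hw]
          have hrb : List.Forall₂ (Rrep r) (a₀ ++ Sum.inl r.1 :: b₀) (u' ++ pl r.1 :: v') :=
            f2_app ha (Forall₂.cons (Or.inl rfl) hb)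
          simpa using hrb
    · exfalso
      obtain ⟨m, -, hex, heq2⟩ := hq
      simp only [trapP, Prod.mk.injEq] at heq2
      obtain ⟨rfl, rfl, rfl⟩ := heq2
      have hmem : nt m ∈ t := lhs_mem heq
      rcases hin with ⟨Y₁, Y₂, rfl, hY₁, hY₂⟩ | hf2
      · rcases List.mem_append.1 hmem with h' | h'
        · exact Rrep_no_mark hY₁ (by rintro rfl; simp at hex) h'
        · rcases List.mem_cons.1 h' with h' | h'
          · have := nt_inj h'; subst this; simp at hex
          · exact Rrep_no_mark hY₂ (by rintro rfl; simp at hex) h'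
      · rcases f2_mem_right hf2 hmem with ⟨a, -, hb | ⟨-, hb⟩⟩
        · exact nt_ne_emb _ a hb
        · have := nt_inj hb; subst this; simp at hex
  obtain ⟨t₁, h1, h2⟩ := tstep_first h
  have hinit0 : RI (W₁ ++ nt (lastMk G r) :: W₂) :=
    Or.inl ⟨W₁, W₂, rfl, hW₁.imp (fun _ _ h => Rp_imp_Rrep h), hW₂.imp (fun _ _ h => Rp_imp_Rrep h)⟩
  have hrun : ∀ {a b : List (Sy N T)}, ReflTransGen (PStep (Crepl G r)) a b →
      RI a → RI b := by
    intro a b hab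
    induction hab with
    | refl => exact id
    | tail _ hs ih => exact fun h0 => hstep hs (ih h0)
  have hfin : RI t' := hrun h2 (hstep h1 hinit0)
  rcases hfin with ⟨Y₁, Y₂, rfl, hY₁, hY₂⟩ | hf2
  · exfalso
    exact h.2 _ ⟨Sum.inr (lastMk G r), lift r.2.1, ∅, Y₁, Y₂, qr_mem_Crepl G r,
      rfl, rfl, by simp⟩
  · have hnp : nt (Mk.pk r) ∉ t' := by
      intro hmem
      rcases List.append_of_mem hmem with ⟨a, b, rfl⟩
      exact h.2 _ ⟨Sum.inr (Mk.pk r), [pl r.1], ∅, a, b, qp_mem_Crepl G r, rfl, rfl, by simp⟩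
    have := Rrep_collapse hf2 hnp
    exact Or.inr (Or.inl ⟨u ++ r.2.1 ++ v, this, hGR.tail hstep₀⟩)
/-! ### helpers for the main invariant preservation -/

lemma stage_no_A {r : Rl N T} {u v : List (Symb N T)} {W₁ W₂ : List (Sy N T)}
    (hW₁ : List.Forall₂ (Rp r) u W₁) (hW₂ : List.Forall₂ (Rp r) v W₂)
    {M₀ : Mk N T} : pl r.1 ∉ W₁ ++ nt M₀ :: W₂ := by
  intro hmem
  rcases List.mem_append.1 hmem with h | h
  · exact Rp_no_A hW₁ h
  · rcases List.mem_cons.1 h with h | h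
    · simp [pl, nt] at h
    · exact Rp_no_A hW₂ h

lemma noappl_of_inr_lhs {G : RCG N T} {P : Set (PermProd (NN N T) T)}
    (hP : ∀ q ∈ P, ∃ m : Mk N T, q.1 = Sum.inr m) {s₀ : List (Symb N T)} :
    ∀ t₂, ¬ PStep P (lift s₀) t₂ := by
  intro t₂ h1
  rcases h1 with ⟨A, x, Per, u', v', hq, heq, -, -⟩
  obtain ⟨m, hm⟩ := hP _ hq
  simp only at hm
  subst hm
  exact nt_not_mem_lift m s₀ (heq ▸ lhs_mem rfl)

lemma no_tstep_of_inr_lhs {G : RCG N T} {P : Set (PermProd (NN N T) T)}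
    (hP : ∀ q ∈ P, ∃ m : Mk N T, q.1 = Sum.inr m) {s₀ : List (Symb N T)}
    {t' : List (Sy N T)} : ¬ TStep P (lift s₀) t' := by
  intro h
  obtain ⟨t₁, h1, -⟩ := tstep_first h
  exact noappl_of_inr_lhs (G := G) hP t₁ h1

lemma inr_lhs_dummy {G : RCG N T} : ∀ q ∈ dummyC G, ∃ m : Mk N T, q.1 = Sum.inr m := by
  rintro q hq
  simp only [dummyC, Set.mem_singleton_iff] at hq
  subst hq; exact ⟨_, rfl⟩

lemma inr_lhs_traps {G : RCG N T} {ex : List (Mk N T)} :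
    ∀ q ∈ traps G ex, ∃ m : Mk N T, q.1 = Sum.inr m := by
  rintro q ⟨m, -, -, rfl⟩; exact ⟨m, rfl⟩

lemma inr_lhs_Cchain {G : RCG N T} {r : Rl N T} :
    ∀ q ∈ Cchain G r, ∃ m : Mk N T, q.1 = Sum.inr m := by
  rintro q ((hq | hq) | hq)
  · simp only [Set.mem_singleton_iff] at hq; subst hq; exact ⟨_, rfl⟩
  · obtain ⟨i, -, rfl⟩ := hq; exact ⟨_, rfl⟩
  · exact inr_lhs_traps _ hq

lemma inr_lhs_Cforb {G : RCG N T} {r : Rl N T} {j : ℕ} :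
    ∀ q ∈ Cforb G r j, ∃ m : Mk N T, q.1 = Sum.inr m := by
  rintro q (hq | hq)
  · simp only [Set.mem_insert_iff, Set.mem_singleton_iff] at hq
    rcases hq with rfl | rfl <;> exact ⟨_, rfl⟩
  · exact inr_lhs_traps _ hq

lemma inr_lhs_Crepl {G : RCG N T} {r : Rl N T} :
    ∀ q ∈ Crepl G r, ∃ m : Mk N T, q.1 = Sum.inr m := by
  rintro q (hq | hq)
  · simp only [Set.mem_insert_iff, Set.mem_singleton_iff] at hq
    rcases hq with rfl | rfl <;> exact ⟨_, rfl⟩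
  · exact inr_lhs_traps _ hq

/-- From the collected conditions, `G` itself can make the step. -/
lemma mk_gstep {G : RCG N T} {r : Rl N T} (hr : r ∈ rulesList G)
    {u v : List (Symb N T)} (hGR : GRd G (u ++ Sum.inl r.1 :: v))
    (hpass : passP G r u v (kk G r)) (hfail : ∀ j' < ll G r, fF G r u v j') :
    G.Step false (u ++ Sum.inl r.1 :: v) (u ++ r.2.1 ++ v) := by
  obtain ⟨hrule, hfin⟩ := (mem_rulesList G).1 hr
  refine ⟨r.1, r.2.1, r.2.2.1, r.2.2.2, u, v, hrule, rfl, rfl, ?_, ?_⟩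
  · intro B hB
    have hmem : B ∈ perList G r := (mem_perList G hfin).2 hB
    obtain ⟨i, hilt, hget⟩ := List.mem_iff_getElem.1 hmem
    have : (perList G r).getD i r.1 = B := by
      rw [List.getD_eq_getElem _ _ hilt]; exact hget
    have := hpass i hilt
    rw [‹(perList G r).getD i r.1 = B›] at this
    exact this
  · intro B hB hmem
    have hBr : B ∈ reachN G := by
      refine NTsub hGR B ?_
      rcases List.mem_append.1 (mem_alph.1 hmem) with h | h
      · exact mem_append_left _ h
      · exact mem_append_right _ (mem_cons_of_mem _ h)
    have hBf : B ∈ forList G r := (mem_forList G).2 ⟨hBr, hB⟩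
    obtain ⟨j', hjlt, hget⟩ := List.mem_iff_getElem.1 hBf
    apply hfail j' hjlt
    have : (forList G r).getD j' r.1 = B := by
      rw [List.getD_eq_getElem _ _ hjlt]; exact hget
    rw [this]
    exact mem_alph.1 hmem

lemma eMk_eq_dd_iff {G : RCG N T} {r r' : Rl N T} {j i : ℕ} :
    eMk G r j = Mk.dd r' i ↔ (j = 0 ∧ r = r' ∧ i = kk G r) := by
  unfold eMk
  split
  · next hj => subst hj; simp [eq_comm, and_comm]
  · next hj => simp [hj]

lemma eMk_eq_ee_iff {G : RCG N T} {r r' : Rl N T} {j j₀ : ℕ} :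
    eMk G r j = Mk.ee r' j₀ ↔ (j ≠ 0 ∧ r = r' ∧ j = j₀) := by
  unfold eMk
  split
  · next hj => simp [hj]
  · next hj => simp [hj]
lemma nostep_dummy_stage {G : RCG N T} {r : Rl N T} {u v : List (Symb N T)}
    {W₁ W₂ t' : List (Sy N T)} {M₀ : Mk N T}
    (hW₁ : List.Forall₂ (Rp r) u W₁) (hW₂ : List.Forall₂ (Rp r) v W₂)
    (hM : Mk.ee ((G.start, [], ∅, ∅) : Rl N T) 0 ≠ M₀) :
    ¬ TStep (dummyC G) (W₁ ++ nt M₀ :: W₂) t' := by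
  intro h
  obtain ⟨t₁, h1, -⟩ := tstep_first h
  rcases h1 with ⟨A, x, Per, u', v', hq, heq, -, -⟩
  simp only [dummyC, Set.mem_singleton_iff, Prod.mk.injEq] at hq
  obtain ⟨rfl, rfl, rfl⟩ := hq
  rcases stage_marks hW₁ hW₂ (lhs_mem heq) with hc | hc
  · simp at hc
  · exact hM hc

lemma noappl_Csel_from_m2 {G : RCG N T} {r : Rl N T} {u v : List (Symb N T)}
    {W₁ W₂ : List (Sy N T)}
    (hW₁ : List.Forall₂ (Rp r) u W₁) (hW₂ : List.Forall₂ (Rp r) v W₂) :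
    ∀ t₂, ¬ PStep (Csel G r) (W₁ ++ nt (Mk.m2 r) :: W₂) t₂ := by
  intro t₂ h1
  rcases h1 with ⟨A, x, Per, u', v', hq, heq, -, hperm⟩
  rcases hq with hq | hq
  · simp only [Set.mem_insert_iff, Set.mem_singleton_iff, Prod.mk.injEq] at hq
    rcases hq with ⟨rfl, rfl, rfl⟩ | ⟨rfl, rfl, rfl⟩ | ⟨rfl, rfl, rfl⟩
    · exact stage_no_A hW₁ hW₂ (lhs_mem heq)
    · exact stage_no_A hW₁ hW₂ (lhs_mem heq)
    · obtain ⟨rfl, rfl⟩ := stage_decomp hW₁ hW₂ (by simp) heq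
      have := hperm (Sum.inr (Mk.m2 r)) rfl
      rcases List.mem_append.1 (mem_alph.1 this) with h' | h'
      · exact Rp_no_mark hW₁ (by simp) h'
      · exact Rp_no_mark hW₂ (by simp) h'
  · obtain ⟨m, -, hex, heq2⟩ := hq
    simp only [trapP, Prod.mk.injEq] at heq2
    obtain ⟨rfl, rfl, rfl⟩ := heq2
    rcases stage_marks hW₁ hW₂ (lhs_mem heq) with hc | hc <;> (subst hc; simp at hex)

lemma nostep_Csel_from_m2 {G : RCG N T} {r : Rl N T} {u v : List (Symb N T)}
    {W₁ W₂ t' : List (Sy N T)}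
    (hW₁ : List.Forall₂ (Rp r) u W₁) (hW₂ : List.Forall₂ (Rp r) v W₂) :
    ¬ TStep (Csel G r) (W₁ ++ nt (Mk.m2 r) :: W₂) t' := by
  intro h
  obtain ⟨t₁, h1, -⟩ := tstep_first h
  exact noappl_Csel_from_m2 hW₁ hW₂ t₁ h1

lemma noappl_Cchain_from_dd {G : RCG N T} {r : Rl N T} {u v : List (Symb N T)}
    {W₁ W₂ : List (Sy N T)} {i : ℕ}
    (hW₁ : List.Forall₂ (Rp r) u W₁) (hW₂ : List.Forall₂ (Rp r) v W₂)
    (hi : i ≤ kk G r) (hstk : i = kk G r ∨ fP G r u v i) :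
    ∀ t₂, ¬ PStep (Cchain G r) (W₁ ++ nt (Mk.dd r i) :: W₂) t₂ := by
  intro t₂ h1
  rcases h1 with ⟨A, x, Per, u', v', hq, heq, -, hperm⟩
  rcases hq with (hq | hq) | hq
  · simp only [Set.mem_singleton_iff, Prod.mk.injEq] at hq
    obtain ⟨rfl, rfl, rfl⟩ := hq
    rcases stage_marks hW₁ hW₂ (lhs_mem heq) with hc | hc <;> simp at hc
  · obtain ⟨i', hi', hq⟩ := hq
    simp only [Prod.mk.injEq] at hq
    obtain ⟨rfl, rfl, rfl⟩ := hq
    have hlt : i' < kk G r := hi'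
    rcases stage_marks hW₁ hW₂ (lhs_mem heq) with hc | hc
    · simp at hc
    · simp only [Mk.dd.injEq] at hc
      obtain ⟨-, rfl⟩ := hc
      obtain ⟨rfl, rfl⟩ := stage_decomp hW₁ hW₂ (by simp) heq
      have := hperm _ rfl
      have hmem := (RpW_cond hW₁ hW₂ _).1 (mem_alph.1 this)
      rcases hstk with hc | hc
      · omega
      · exact hc hmem
  · obtain ⟨m, -, hex, heq2⟩ := hq
    simp only [trapP, Prod.mk.injEq] at heq2
    obtain ⟨rfl, rfl, rfl⟩ := heq2
    rcases stage_marks hW₁ hW₂ (lhs_mem heq) with hc | hc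
    · subst hc; simp at hex
    · subst hc
      exact hex (List.mem_append_right _
        (List.mem_map.2 ⟨i, List.mem_range.2 (by omega), rfl⟩))

lemma nostep_Cchain_from_dd {G : RCG N T} {r : Rl N T} {u v : List (Symb N T)}
    {W₁ W₂ t' : List (Sy N T)} {i : ℕ}
    (hW₁ : List.Forall₂ (Rp r) u W₁) (hW₂ : List.Forall₂ (Rp r) v W₂)
    (hi : i ≤ kk G r) (hstk : i = kk G r ∨ fP G r u v i) :
    ¬ TStep (Cchain G r) (W₁ ++ nt (Mk.dd r i) :: W₂) t' := by
  intro h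
  obtain ⟨t₁, h1, -⟩ := tstep_first h
  exact noappl_Cchain_from_dd hW₁ hW₂ hi hstk t₁ h1

lemma noappl_Cforb_from_ee {G : RCG N T} {r : Rl N T} {u v : List (Symb N T)}
    {W₁ W₂ : List (Sy N T)} {j' : ℕ}
    (hW₁ : List.Forall₂ (Rp r) u W₁) (hW₂ : List.Forall₂ (Rp r) v W₂)
    (hfF : fF G r u v j') :
    ∀ t₂, ¬ PStep (Cforb G r j') (W₁ ++ nt (Mk.ee r (j'+1)) :: W₂) t₂ := by
  intro t₂ h1
  rcases h1 with ⟨A, x, Per, u', v', hq, heq, -, hperm⟩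
  rcases hq with hq | hq
  · simp only [Set.mem_insert_iff, Set.mem_singleton_iff, Prod.mk.injEq] at hq
    rcases hq with ⟨rfl, rfl, rfl⟩ | ⟨rfl, rfl, rfl⟩
    · rcases stage_marks hW₁ hW₂ (lhs_mem heq) with hc | hc
      · exact eMk_ne_pk hc
      · exact eMk_ne_ee_succ hc
    · obtain ⟨rfl, rfl⟩ := stage_decomp hW₁ hW₂ (by simp) heq
      have := hperm _ rfl
      exact hfF ((RpW_cond hW₁ hW₂ _).1 (mem_alph.1 this))
  · obtain ⟨m, -, hex, heq2⟩ := hq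
    simp only [trapP, Prod.mk.injEq] at heq2
    obtain ⟨rfl, rfl, rfl⟩ := heq2
    rcases stage_marks hW₁ hW₂ (lhs_mem heq) with hc | hc <;> (subst hc; simp at hex)

lemma nostep_Cforb_from_ee {G : RCG N T} {r : Rl N T} {u v : List (Symb N T)}
    {W₁ W₂ t' : List (Sy N T)} {j' : ℕ}
    (hW₁ : List.Forall₂ (Rp r) u W₁) (hW₂ : List.Forall₂ (Rp r) v W₂)
    (hfF : fF G r u v j') :
    ¬ TStep (Cforb G r j') (W₁ ++ nt (Mk.ee r (j'+1)) :: W₂) t' := by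
  intro h
  obtain ⟨t₁, h1, -⟩ := tstep_first h
  exact noappl_Cforb_from_ee hW₁ hW₂ hfF t₁ h1

/-! ### the invariant is preserved -/

theorem inv_step {G : RCG N T} {P : Set (PermProd (NN N T) T)} (hP : P ∈ comps G)
    {t t' : List (Sy N T)} (ht : Inv G t) (h : TStep P t t') : Inv G t' := by
  rcases ht with hF | ⟨s₀, rfl, hGR⟩ | ⟨r, hr, u, v, W₁, W₂, hGR, hW₁, hW₂, hst⟩
  · exact Or.inl (F_persists_rtg (comps_no_F_lhs hP) h.1.to_reflTransGen hF)
  · -- plain string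
    rcases mem_comps.1 hP with rfl | ⟨r, hr, rfl | rfl | ⟨j, hj, rfl⟩ | rfl⟩
    · exact absurd h (no_tstep_of_inr_lhs (G := G) inr_lhs_dummy)
    · exact csel_tstep hr hGR h
    · exact absurd h (no_tstep_of_inr_lhs (G := G) inr_lhs_Cchain)
    · exact absurd h (no_tstep_of_inr_lhs (G := G) inr_lhs_Cforb)
    · exact absurd h (no_tstep_of_inr_lhs (G := G) inr_lhs_Crepl)
  · have hmid : ∀ M₀ : Mk N T, nt M₀ ∈ W₁ ++ nt M₀ :: W₂ :=
      fun M₀ => mem_append_right _ (mem_cons_self)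
    rcases hst with heq | ⟨i, hi, heq, hpass, hstk⟩ | ⟨j, hj1, hj2, heq, hpassk, hfail⟩
    · -- stage m2
      subst heq
      rcases mem_comps.1 hP with rfl | ⟨r', hr', rfl | rfl | ⟨j', hj', rfl⟩ | rfl⟩
      · exact absurd h (nostep_dummy_stage hW₁ hW₂ (by simp))
      · by_cases hrr : r' = r
        · subst hrr; exact absurd h (nostep_Csel_from_m2 hW₁ hW₂)
        · refine Or.inl (foreign_F hP (pack_Csel (m2_mem_allMk hr) (by simp) ?_)
            (hmid _) h)
          intro hc; exact hrr (Mk.m2.inj hc).symm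
      · by_cases hrr : r' = r
        · subst hrr; exact cchain_tstep hr hGR hW₁ hW₂ h
        · refine Or.inl (foreign_F hP (pack_Cchain (m2_mem_allMk hr) (by simp) ?_
            (fun i => by simp)) (hmid _) h)
          intro hc; exact hrr (Mk.m2.inj hc).symm
      · refine Or.inl (foreign_F hP (pack_Cforb (m2_mem_allMk hr) (by simp) ?_ (by simp))
          (hmid _) h)
        intro hc; exact eMk_ne_m2 hc.symm
      · refine Or.inl (foreign_F hP (pack_Crepl (m2_mem_allMk hr) (by simp) ?_)
          (hmid _) h)
        intro hc; exact eMk_ne_m2 hc.symm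
    · -- stage dd
      subst heq
      rcases mem_comps.1 hP with rfl | ⟨r', hr', rfl | rfl | ⟨j', hj', rfl⟩ | rfl⟩
      · exact absurd h (nostep_dummy_stage hW₁ hW₂ (by simp))
      · refine Or.inl (foreign_F hP (pack_Csel (dd_mem_allMk hr hi) (by simp) (by simp))
          (hmid _) h)
      · by_cases hrr : r' = r
        · subst hrr; exact absurd h (nostep_Cchain_from_dd hW₁ hW₂ hi hstk)
        · refine Or.inl (foreign_F hP (pack_Cchain (dd_mem_allMk hr hi) (by simp)
            (by simp) ?_) (hmid _) h)
          intro i' hc; exact hrr ((Mk.dd.inj hc).1).symm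
      · by_cases hLM : eMk G r' j' = Mk.dd r i
        · obtain ⟨rfl, rfl, rfl⟩ := eMk_eq_dd_iff.1 hLM
          have hpassk : passP G r' u v (kk G r') := hpass
          rw [show Mk.dd r' (kk G r') = eMk G r' 0 by simp [eMk]] at h
          exact cforb_tstep hr' hj' hGR hW₁ hW₂ hpassk (fun j'' h'' => absurd h'' (by omega)) h
        · refine Or.inl (foreign_F hP (pack_Cforb (dd_mem_allMk hr hi) (by simp) ?_
            (by simp)) (hmid _) h)
          intro hc; exact hLM hc.symm
      · by_cases hLM : lastMk G r' = Mk.dd r i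
        · obtain ⟨hll0, rfl, rfl⟩ := eMk_eq_dd_iff.1 hLM
          have hpassk : passP G r' u v (kk G r') := hpass
          have hstep₀ := mk_gstep hr' hGR hpassk (fun j'' h'' => absurd h'' (by omega))
          rw [← hLM] at h
          exact crepl_tstep hr' hGR hW₁ hW₂ hstep₀ h
        · refine Or.inl (foreign_F hP (pack_Crepl (dd_mem_allMk hr hi) (by simp) ?_)
            (hmid _) h)
          intro hc; exact hLM hc.symm
    · -- stage ee
      subst heq
      rcases mem_comps.1 hP with rfl | ⟨r', hr', rfl | rfl | ⟨j', hj', rfl⟩ | rfl⟩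
      · refine absurd h (nostep_dummy_stage hW₁ hW₂ ?_)
        simp only [ne_eq, Mk.ee.injEq, not_and]
        intro _; omega
      · exact Or.inl (foreign_F hP (pack_Csel (ee_mem_allMk hr hj1 hj2) (by simp)
          (by simp)) (hmid _) h)
      · exact Or.inl (foreign_F hP (pack_Cchain (ee_mem_allMk hr hj1 hj2) (by simp)
          (by simp) (fun i => by simp)) (hmid _) h)
      · by_cases hA : r' = r ∧ j' = j
        · obtain ⟨rfl, rfl⟩ := hA
          rw [show Mk.ee r' j' = eMk G r' j' from
            (eMk_eq_ee_iff.2 ⟨by omega, rfl, rfl⟩).symm] at h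
          exact cforb_tstep hr' hj' hGR hW₁ hW₂ hpassk hfail h
        · by_cases hB : r' = r ∧ j' + 1 = j
          · obtain ⟨rfl, hB2⟩ := hB
            subst hB2
            exact absurd h (nostep_Cforb_from_ee hW₁ hW₂ (hfail j' (by omega)))
          · refine Or.inl (foreign_F hP (pack_Cforb (ee_mem_allMk hr hj1 hj2) (by simp)
              ?_ ?_) (hmid _) h)
            · intro hc
              obtain ⟨hj0, rfl, rfl⟩ := eMk_eq_ee_iff.1 hc.symm
              exact hA ⟨rfl, rfl⟩
            · intro hc
              obtain ⟨rfl, hc2⟩ := Mk.ee.inj hc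
              exact hB ⟨rfl, hc2.symm⟩
      · by_cases hLM : lastMk G r' = Mk.ee r j
        · obtain ⟨hll0, rfl, hjll⟩ := eMk_eq_ee_iff.1 hLM
          have hstep₀ := mk_gstep hr' hGR hpassk (fun j'' h'' => hfail j'' (by omega))
          rw [← hLM] at h
          exact crepl_tstep hr' hGR hW₁ hW₂ hstep₀ h
        · refine Or.inl (foreign_F hP (pack_Crepl (ee_mem_allMk hr hj1 hj2) (by simp) ?_)
            (hmid _) h)
          intro hc; exact hLM hc.symm
attribute [local instance] Classical.propDecidable

/-! ### completeness: simulating a `G`-step -/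

noncomputable def parkf (r : Rl N T) : Symb N T → Sy N T :=
  fun a => if a = Sum.inl r.1 then nt (Mk.pk r) else emb a

lemma f2_park (r : Rl N T) (s : List (Symb N T)) :
    List.Forall₂ (Rp r) s (s.map (parkf r)) := by
  induction s with
  | nil => exact Forall₂.nil
  | cons a s ih =>
    refine Forall₂.cons ?_ ih
    by_cases ha : a = Sum.inl r.1
    · subst ha; exact Or.inr ⟨rfl, by simp [parkf]⟩
    · exact Or.inl ⟨by simp [parkf, ha], ha⟩

lemma eMk_zero (G : RCG N T) (r : Rl N T) : eMk G r 0 = Mk.dd r (kk G r) := if_pos rfl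

lemma eMk_succ (G : RCG N T) (r : Rl N T) (j : ℕ) : eMk G r (j+1) = Mk.ee r (j+1) :=
  if_neg (Nat.succ_ne_zero j)

lemma park_rtg (G : RCG N T) (r : Rl N T) :
    ∀ (s : List (Symb N T)) (pre suf : List (Sy N T)),
      (nt (Mk.m2 r) ∈ pre ∨ nt (Mk.m2 r) ∈ suf) →
      ReflTransGen (PStep (Csel G r)) (pre ++ lift s ++ suf) (pre ++ s.map (parkf r) ++ suf) := by
  intro s
  induction s with
  | nil =>
    intro pre suf _
    simp only [lift, List.map_nil, List.append_nil]
    exact ReflTransGen.refl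
  | cons a s ih =>
    intro pre suf hm2
    by_cases ha : a = Sum.inl r.1
    · subst ha
      have hstep : PStep (Csel G r) (pre ++ lift (Sum.inl r.1 :: s) ++ suf)
          ((pre ++ [nt (Mk.pk r)]) ++ lift s ++ suf) := by
        refine ⟨Sum.inl r.1, [nt (Mk.pk r)], {Sum.inr (Mk.m2 r)}, pre, lift s ++ suf,
          q2_mem_Csel G r, by simp [lift, pl, emb], by simp, ?_⟩
        rintro B hB
        simp only [Set.mem_singleton_iff] at hB
        subst hB
        rcases hm2 with h | h
        · exact mem_alph.2 (mem_append_left _ h)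
        · exact mem_alph.2 (mem_append_right _ (mem_append_right _ h))
      refine ReflTransGen.head hstep ?_
      have hrec := ih (pre ++ [nt (Mk.pk r)]) suf
        (by rcases hm2 with h | h
            · exact Or.inl (mem_append_left _ h)
            · exact Or.inr h)
      have : pre ++ (Sum.inl r.1 :: s).map (parkf r) ++ suf =
          (pre ++ [nt (Mk.pk r)]) ++ s.map (parkf r) ++ suf := by
        simp [parkf]
      rw [this]
      exact hrec
    · have hrec := ih (pre ++ [emb a]) suf
        (by rcases hm2 with h | h
            · exact Or.inl (mem_append_left _ h)
            · exact Or.inr h)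
      have h1 : pre ++ lift (a :: s) ++ suf = (pre ++ [emb a]) ++ lift s ++ suf := by
        simp [lift]
      have h2 : pre ++ (a :: s).map (parkf r) ++ suf =
          (pre ++ [emb a]) ++ s.map (parkf r) ++ suf := by
        simp [parkf, ha]
      rw [h1, h2]
      exact hrec

lemma unpark_rtg (G : RCG N T) (r : Rl N T) :
    ∀ (s : List (Symb N T)) (pre suf : List (Sy N T)),
      ReflTransGen (PStep (Crepl G r)) (pre ++ s.map (parkf r) ++ suf) (pre ++ lift s ++ suf) := by
  intro s
  induction s with
  | nil =>
    intro pre suf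
    simp only [lift, List.map_nil, List.append_nil]
    exact ReflTransGen.refl
  | cons a s ih =>
    intro pre suf
    by_cases ha : a = Sum.inl r.1
    · subst ha
      have hstep : PStep (Crepl G r) (pre ++ (Sum.inl r.1 :: s).map (parkf r) ++ suf)
          ((pre ++ [pl r.1]) ++ s.map (parkf r) ++ suf) := by
        refine ⟨Sum.inr (Mk.pk r), [pl r.1], ∅, pre, s.map (parkf r) ++ suf,
          qp_mem_Crepl G r, by simp [parkf, nt], by simp, by simp⟩
      refine ReflTransGen.head hstep ?_
      have hrec := ih (pre ++ [pl r.1]) suf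
      have : pre ++ lift (Sum.inl r.1 :: s) ++ suf = (pre ++ [pl r.1]) ++ lift s ++ suf := by
        simp [lift]
      rw [this]
      exact hrec
    · have hrec := ih (pre ++ [emb a]) suf
      have h1 : pre ++ (a :: s).map (parkf r) ++ suf =
          (pre ++ [emb a]) ++ s.map (parkf r) ++ suf := by
        simp [parkf, ha]
      have h2 : pre ++ lift (a :: s) ++ suf = (pre ++ [emb a]) ++ lift s ++ suf := by
        simp [lift]
      rw [h1, h2]
      exact hrec

lemma chain_rtg (G : RCG N T) (r : Rl N T) {P₁ P₂ : List (Sy N T)}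
    (hcond : ∀ i < kk G r,
      Sum.inl (condN r ((perList G r).getD i r.1)) ∈ alph (P₁ ++ P₂)) :
    ∀ (n i : ℕ), i + n = kk G r →
      ReflTransGen (PStep (Cchain G r)) (P₁ ++ nt (Mk.dd r i) :: P₂)
        (P₁ ++ nt (Mk.dd r (kk G r)) :: P₂) := by
  intro n
  induction n with
  | zero =>
    intro i hik
    rw [show i = kk G r by omega]
  | succ n ihn =>
    intro i hik
    refine ReflTransGen.head ?_ (ihn (i+1) (by omega))
    refine ⟨Sum.inr (Mk.dd r i), [nt (Mk.dd r (i+1))],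
      {condN r ((perList G r).getD i r.1)}, P₁, P₂,
      qi_mem_Cchain G r (by omega), rfl, by simp, ?_⟩
    rintro B hB
    simp only [Set.mem_singleton_iff] at hB
    subst hB
    exact hcond i (by omega)
def CDrel (G : RCG N T) (s₁ s₂ : List (Sy N T)) : Prop := ∃ P ∈ comps G, TStep P s₁ s₂

lemma sim_step {G : RCG N T} {s₁ s₂ : List (Symb N T)} (h : G.Step false s₁ s₂) :
    ReflTransGen (CDrel G) (lift s₁) (lift s₂) := by
  obtain ⟨A, x, Per, For, u, v, hrule, rfl, rfl, hper, hforb⟩ := h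
  set r : Rl N T := (A, x, Per, For) with hrdef
  have hr : r ∈ rulesList G := step_rule_mem hrule hper
  have hfin : Per.Finite := per_finite_of_cond hper
  set P₁ := u.map (parkf r) with hP₁
  set P₂ := v.map (parkf r) with hP₂
  have hW₁ : List.Forall₂ (Rp r) u P₁ := f2_park r u
  have hW₂ : List.Forall₂ (Rp r) v P₂ := f2_park r v
  have hcond := RpW_cond hW₁ hW₂
  -- step 1 : Csel
  have T1 : TStep (Csel G r) (lift (u ++ Sum.inl A :: v)) (P₁ ++ nt (Mk.m2 r) :: P₂) := by
    constructor
    · refine Relation.TransGen.head'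
        (b := lift u ++ nt (Mk.m2 r) :: lift v) ?_ ?_
      · exact ⟨Sum.inl A, [nt (Mk.m2 r)], ∅, lift u, lift v, q1_mem_Csel G r,
          by simp [lift, pl, emb], by simp, by simp⟩
      · have h1 := park_rtg G r u [] (nt (Mk.m2 r) :: lift v) (Or.inr (by simp))
        have h2 := park_rtg G r v (P₁ ++ [nt (Mk.m2 r)]) [] (Or.inl (by simp))
        simp only [List.nil_append, List.append_nil] at h1 h2
        have h1' : ReflTransGen (PStep (Csel G r)) (lift u ++ nt (Mk.m2 r) :: lift v)
            (P₁ ++ nt (Mk.m2 r) :: lift v) := by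
          have e1 : lift u ++ (nt (Mk.m2 r) :: lift v) = lift u ++ nt (Mk.m2 r) :: lift v := rfl
          exact h1
        have h2' : ReflTransGen (PStep (Csel G r)) (P₁ ++ nt (Mk.m2 r) :: lift v)
            (P₁ ++ nt (Mk.m2 r) :: P₂) := by
          have e1 : P₁ ++ [nt (Mk.m2 r)] ++ lift v = P₁ ++ nt (Mk.m2 r) :: lift v := by simp
          have e2 : P₁ ++ [nt (Mk.m2 r)] ++ P₂ = P₁ ++ nt (Mk.m2 r) :: P₂ := by simp
          rw [e1, e2] at h2
          exact h2
        exact h1'.trans h2'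
    · exact noappl_Csel_from_m2 hW₁ hW₂
  -- step 2 : Cchain
  have hchaincond : ∀ i < kk G r,
      Sum.inl (condN r ((perList G r).getD i r.1)) ∈ alph (P₁ ++ P₂) := by
    intro i hilt
    have hmem : (perList G r).getD i r.1 ∈ perList G r := by
      rw [List.getD_eq_getElem _ _ hilt]
      exact List.getElem_mem _
    have hBper : (perList G r).getD i r.1 ∈ Per := (mem_perList G hfin).1 hmem
    have := hper _ hBper
    exact mem_alph.2 ((hcond _).2 (mem_alph.1 this))
  have T2 : TStep (Cchain G r) (P₁ ++ nt (Mk.m2 r) :: P₂)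
      (P₁ ++ nt (Mk.dd r (kk G r)) :: P₂) := by
    constructor
    · refine Relation.TransGen.head' (b := P₁ ++ nt (Mk.dd r 0) :: P₂) ?_ ?_
      · exact ⟨Sum.inr (Mk.m2 r), [nt (Mk.dd r 0)], ∅, P₁, P₂, q0_mem_Cchain G r,
          rfl, by simp, by simp⟩
      · exact chain_rtg G r hchaincond (kk G r) 0 (by omega)
    · exact noappl_Cchain_from_dd hW₁ hW₂ le_rfl (Or.inl rfl)
  -- step 3 : the forbidding checks
  have hfF : ∀ j < ll G r, fF G r u v j := by
    intro j hj hmem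
    have hBmem : (forList G r).getD j r.1 ∈ forList G r := by
      rw [List.getD_eq_getElem _ _ hj]
      exact List.getElem_mem _
    have hBf : (forList G r).getD j r.1 ∈ For := ((mem_forList G).1 hBmem).2
    exact hforb _ hBf (mem_alph.2 hmem)
  have T3 : ∀ j < ll G r, TStep (Cforb G r j) (P₁ ++ nt (eMk G r j) :: P₂)
      (P₁ ++ nt (eMk G r (j+1)) :: P₂) := by
    intro j hj
    constructor
    · refine Relation.TransGen.single ?_
      rw [eMk_succ]
      exact ⟨Sum.inr (eMk G r j), [nt (Mk.ee r (j+1))], ∅, P₁, P₂, qa_mem_Cforb G r j,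
        rfl, by simp, by simp⟩
    · rw [eMk_succ]
      exact noappl_Cforb_from_ee hW₁ hW₂ (hfF j hj)
  -- step 4 : Crepl
  have T4 : TStep (Crepl G r) (P₁ ++ nt (lastMk G r) :: P₂) (lift (u ++ x ++ v)) := by
    constructor
    · refine Relation.TransGen.head' (b := P₁ ++ lift x ++ P₂) ?_ ?_
      · exact ⟨Sum.inr (lastMk G r), lift x, ∅, P₁, P₂, qr_mem_Crepl G r, rfl, rfl, by simp⟩
      · have h1 := unpark_rtg G r u [] (lift x ++ P₂)
        have h2 := unpark_rtg G r v (lift u ++ lift x) []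
        simp only [List.nil_append, List.append_nil] at h1 h2
        have e0 : P₁ ++ lift x ++ P₂ = P₁ ++ (lift x ++ P₂) := by simp
        have e1 : lift (u ++ x ++ v) = lift u ++ lift x ++ lift v := by simp [lift]
        rw [e0, e1]
        refine ReflTransGen.trans h1 ?_
        have e2 : lift u ++ (lift x ++ P₂) = lift u ++ lift x ++ P₂ := by simp
        have e3 : lift u ++ lift x ++ lift v = lift u ++ lift x ++ lift v := rfl
        rw [e2]
        exact h2
    · have : lift (u ++ x ++ v) = lift (u ++ x ++ v) := rfl
      exact noappl_of_inr_lhs (G := G) inr_lhs_Crepl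
  -- memberships
  have mSel : Csel G r ∈ comps G := mem_comps.2 (Or.inr ⟨r, hr, Or.inl rfl⟩)
  have mCh : Cchain G r ∈ comps G := mem_comps.2 (Or.inr ⟨r, hr, Or.inr (Or.inl rfl)⟩)
  have mFo : ∀ j < ll G r, Cforb G r j ∈ comps G := fun j hj =>
    mem_comps.2 (Or.inr ⟨r, hr, Or.inr (Or.inr (Or.inl ⟨j, hj, rfl⟩))⟩)
  have mRe : Crepl G r ∈ comps G := mem_comps.2 (Or.inr ⟨r, hr, Or.inr (Or.inr (Or.inr rfl))⟩)
  -- forb chain as RTG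
  have forb_rtg : ∀ (n j : ℕ), j + n = ll G r →
      ReflTransGen (CDrel G) (P₁ ++ nt (eMk G r j) :: P₂)
        (P₁ ++ nt (eMk G r (ll G r)) :: P₂) := by
    intro n
    induction n with
    | zero =>
      intro j hj
      rw [show j = ll G r by omega]
    | succ n ihn =>
      intro j hj
      exact ReflTransGen.head ⟨Cforb G r j, mFo j (by omega), T3 j (by omega)⟩
        (ihn (j+1) (by omega))
  refine ReflTransGen.head ⟨Csel G r, mSel, T1⟩ ?_
  refine ReflTransGen.head ⟨Cchain G r, mCh, T2⟩ ?_
  have e4 : P₁ ++ nt (Mk.dd r (kk G r)) :: P₂ = P₁ ++ nt (eMk G r 0) :: P₂ := by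
    rw [eMk_zero]
  rw [e4]
  refine ReflTransGen.trans (forb_rtg (ll G r) 0 (by omega)) ?_
  exact ReflTransGen.single ⟨Crepl G r, mRe, T4⟩
/-! ### assembling the CD grammar system -/

lemma traps_finite {G : RCG N T} {ex : List (Mk N T)} : (traps G ex).Finite := by
  have hsub : traps G ex ⊆ trapP '' {m | m ∈ allMk G} := by
    rintro q ⟨m, h1, -, rfl⟩
    exact ⟨m, h1, rfl⟩
  exact (((allMk G).finite_toSet).image _).subset hsub

lemma comps_fin {G : RCG N T} : ∀ P ∈ comps G, P.Finite := by
  intro P hP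
  rcases mem_comps.1 hP with rfl | ⟨r, hr, rfl | rfl | ⟨j, hj, rfl⟩ | rfl⟩
  · exact Set.finite_singleton _
  · exact ((Set.finite_singleton _).insert _ |>.insert _).union traps_finite
  · exact (((Set.finite_singleton _).union ((Set.finite_Iio _).image _))).union traps_finite
  · exact ((Set.finite_singleton _).insert _).union traps_finite
  · exact ((Set.finite_singleton _).insert _).union traps_finite

lemma comps_rhs_ne {G : RCG N T} : ∀ P ∈ comps G, ∀ q ∈ P, q.2.1 ≠ [] := by
  have htr : ∀ ex, ∀ q ∈ traps G ex, q.2.1 ≠ ([] : List (Sy N T)) := by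
    rintro ex q ⟨m, -, -, rfl⟩
    simp [trapP]
  intro P hP
  rcases mem_comps.1 hP with rfl | ⟨r, hr, rfl | rfl | ⟨j, hj, rfl⟩ | rfl⟩
  · rintro q hq
    simp only [dummyC, Set.mem_singleton_iff] at hq
    subst hq; simp
  · rintro q (hq | hq)
    · simp only [Set.mem_insert_iff, Set.mem_singleton_iff] at hq
      rcases hq with rfl | rfl | rfl <;> simp
    · exact htr _ _ hq
  · rintro q ((hq | hq) | hq)
    · simp only [Set.mem_singleton_iff] at hq; subst hq; simp
    · obtain ⟨i, -, rfl⟩ := hq; simp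
    · exact htr _ _ hq
  · rintro q (hq | hq)
    · simp only [Set.mem_insert_iff, Set.mem_singleton_iff] at hq
      rcases hq with rfl | rfl <;> simp
    · exact htr _ _ hq
  · rintro q (hq | hq)
    · simp only [Set.mem_insert_iff, Set.mem_singleton_iff] at hq
      rcases hq with rfl | rfl
      · have hx : r.2.1 ≠ [] := G.ne r ((mem_rulesList G).1 hr).1
        simp only [lift, ne_eq, List.map_eq_nil_iff]
        exact hx
      · simp
    · exact htr _ _ hq

lemma comps_sub {G : RCG N T} : ∀ P ∈ comps G, ∀ q ∈ P, q.2.2.Subsingleton := by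
  have htr : ∀ ex, ∀ q ∈ traps G ex, (q.2.2 : Set (NN N T)).Subsingleton := by
    rintro ex q ⟨m, -, -, rfl⟩
    exact Set.subsingleton_empty
  intro P hP
  rcases mem_comps.1 hP with rfl | ⟨r, hr, rfl | rfl | ⟨j, hj, rfl⟩ | rfl⟩
  · rintro q hq
    simp only [dummyC, Set.mem_singleton_iff] at hq
    subst hq; exact Set.subsingleton_empty
  · rintro q (hq | hq)
    · simp only [Set.mem_insert_iff, Set.mem_singleton_iff] at hq
      rcases hq with rfl | rfl | rfl
      · exact Set.subsingleton_empty
      · exact Set.subsingleton_singleton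
      · exact Set.subsingleton_singleton
    · exact htr _ _ hq
  · rintro q ((hq | hq) | hq)
    · simp only [Set.mem_singleton_iff] at hq; subst hq; exact Set.subsingleton_empty
    · obtain ⟨i, -, rfl⟩ := hq; exact Set.subsingleton_singleton
    · exact htr _ _ hq
  · rintro q (hq | hq)
    · simp only [Set.mem_insert_iff, Set.mem_singleton_iff] at hq
      rcases hq with rfl | rfl
      · exact Set.subsingleton_empty
      · exact Set.subsingleton_singleton
    · exact htr _ _ hq
  · rintro q (hq | hq)
    · simp only [Set.mem_insert_iff, Set.mem_singleton_iff] at hq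
      rcases hq with rfl | rfl <;> exact Set.subsingleton_empty
    · exact htr _ _ hq

noncomputable def Gamma (G : RCG N T) : CDGS (NN N T) T where
  comps := comps G
  comps_ne := by simp [comps]
  fin := comps_fin
  ne := comps_rhs_ne
  start := Sum.inl G.start

lemma lift_eq_inr {s₀ : List (Symb N T)} :
    ∀ {w : List T}, lift s₀ = w.map Sum.inr → s₀ = w.map Sum.inr := by
  induction s₀ with
  | nil =>
    intro w h
    cases w
    · rfl
    · simp [lift] at h
  | cons a s ih =>
    intro w h
    cases w with
    | nil => simp [lift] at h
    | cons b w =>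
      simp only [lift, List.map_cons, List.cons.injEq] at h ⊢
      obtain ⟨h1, h2⟩ := h
      refine ⟨?_, ih h2⟩
      cases a with
      | inl C => simp [emb] at h1
      | inr t => simpa [emb] using h1

lemma inv_rtg {G : RCG N T} {a b : List (Sy N T)}
    (h : ReflTransGen (CDrel G) a b) (ha : Inv G a) : Inv G b := by
  induction h with
  | refl => exact ha
  | tail _ hs ih =>
    obtain ⟨P, hP, hts⟩ := hs
    exact inv_step hP ih hts

lemma sim_rtg {G : RCG N T} {a b : List (Symb N T)}
    (h : ReflTransGen (G.Step false) a b) :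
    ReflTransGen (CDrel G) (lift a) (lift b) := by
  induction h with
  | refl => exact ReflTransGen.refl
  | tail _ hs ih => exact ih.trans (sim_step hs)

theorem lang_eq (G : RCG N T) : (Gamma G).Lang = G.Lang false := by
  ext w
  constructor
  · intro hw
    have hw' : ReflTransGen (CDrel G) [Sum.inl (Sum.inl G.start)] (w.map Sum.inr) := hw
    have hInv : Inv G (w.map Sum.inr) := by
      refine inv_rtg hw' ?_
      exact Or.inr (Or.inl ⟨[Sum.inl G.start], rfl, ReflTransGen.refl⟩)
    have hnomk : ∀ m : Mk N T, nt m ∉ w.map Sum.inr := by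
      intro m hm
      rcases List.mem_map.1 hm with ⟨a, -, ha⟩
      simp [nt] at ha
    rcases hInv with hF | ⟨s₀, heq, hGR⟩ | ⟨r, hr, u, v, W₁, W₂, -, -, -, hst⟩
    · exact absurd hF (hnomk _)
    · have : s₀ = w.map Sum.inr := lift_eq_inr heq.symm
      subst this
      exact hGR
    · exfalso
      rcases hst with heq | ⟨i, -, heq, -⟩ | ⟨j, -, -, heq, -⟩ <;>
        exact hnomk _ (heq ▸ mem_append_right _ (mem_cons_self))
  · intro hw
    have := sim_rtg (G := G) hw
    have hstart : lift [Sum.inl G.start] = [Sum.inl (Sum.inl (G.start) : NN N T)] := rfl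
    have hend : lift (w.map (Sum.inr : T → Symb N T)) =
        w.map (Sum.inr : T → Sy N T) := by
      simp only [lift, List.map_map]
      rfl
    rw [hstart, hend] at this
    exact this

end RCCD

/-- every random context language is generated by a permitting CD
grammar system in `t`-mode whose permitting sets are empty or singletons. -/
theorem rc_subset_cdp_singleton (T : Type) (L : Set (List T)) (hL : L ∈ RC T) :
    ∃ (N : Type) (Γ : CDGS N T),
      (∀ P ∈ Γ.comps, ∀ r ∈ P, r.2.2.Subsingleton) ∧ Γ.Lang = L := by
  obtain ⟨N, G, rfl⟩ := hL
  exact ⟨RCCD.NN N T, RCCD.Gamma G, RCCD.comps_sub, RCCD.lang_eq G⟩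
end

section
/- Every random context language (nonerasing) is generated by a semi-conditional grammar of degree (1,1) (nonerasing): RC ⊆ SC(1,1). -/
namespace RCSC

variable {N T : Type}

abbrev Rul (N T : Type) := N × List (Symb N T) × Set N × Set N

inductive HSym (N T : Type) : Type
  | raw : N → HSym N T
  | rdy : Symb N T → HSym N T
  | seek : Rul N T → Symb N T → HSym N T
  | pend : Rul N T → Symb N T → HSym N T
  | chk : Rul N T → Set N → Set N → HSym N T

def e : Symb N T → Symb (HSym N T) T := Sum.elim (fun A => Sum.inl (.raw A)) Sum.inr

def em (g : List (Symb N T)) : List (Symb (HSym N T) T) := g.map e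

abbrev hh (s : HSym N T) : Symb (HSym N T) T := Sum.inl s

variable (G : RCG N T)

def N0 : Set N := insert G.start (⋃ r ∈ G.rules, insert r.1 {B | Sum.inl B ∈ r.2.1})
def T0 : Set T := ⋃ r ∈ G.rules, {t | Sum.inr t ∈ r.2.1}
def Sig : Set (Symb N T) := Sum.inl '' N0 G ∪ Sum.inr '' T0 G
def U : Set (Rul N T) := {r | r ∈ G.rules ∧ r.2.2.1.Finite}
def ForOf (r : Rul N T) : Set N := r.2.2.2 ∩ N0 G
def chk0 (r : Rul N T) : HSym N T := .chk r r.2.2.1 (ForOf G r)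

def commitRhs : List (Symb N T) → List (Symb (HSym N T) T)
  | [] => []
  | a :: t => hh (.rdy a) :: em t

abbrev HRul (N T : Type) := HSym N T × List (Symb (HSym N T) T) × Set (Symb (HSym N T) T) × Set (Symb (HSym N T) T)

def S1 : Set (HRul N T) := (fun r => (HSym.rdy (Sum.inl r.1), [hh (chk0 G r)], ∅, ∅)) '' U G
def S1b : Set (HRul N T) := (fun p : Rul N T × Symb N T => (HSym.rdy p.2, [hh (.seek p.1 p.2)], ∅, ∅)) '' (U G ×ˢ Sig G)
def S2 : Set (HRul N T) := (fun p : Rul N T × Symb N T => (HSym.raw p.1.1, [hh (.pend p.1 p.2)], {hh (.seek p.1 p.2)}, {hh (.pend p.1 p.2)})) '' (U G ×ˢ Sig G)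
def S3 : Set (HRul N T) := (fun p : Rul N T × Symb N T => (HSym.seek p.1 p.2, [e p.2], {hh (.pend p.1 p.2)}, ∅)) '' (U G ×ˢ Sig G)
def S4 : Set (HRul N T) := (fun p : Rul N T × Symb N T => (HSym.pend p.1 p.2, [hh (chk0 G p.1)], ∅, {hh (.seek p.1 p.2)})) '' (U G ×ˢ Sig G)
def S5 : Set (HRul N T) := ⋃ r ∈ U G, (fun q : Set N × Set N × N => (HSym.chk r q.1 q.2.1, [hh (.chk r (q.1 \ {q.2.2}) q.2.1)], {e (Sum.inl q.2.2)}, ∅)) '' {q | q.1 ⊆ r.2.2.1 ∧ q.2.1 ⊆ ForOf G r ∧ q.2.2 ∈ q.1}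
def S6 : Set (HRul N T) := ⋃ r ∈ U G, (fun q : Set N × Set N × N => (HSym.chk r q.1 q.2.1, [hh (.chk r q.1 (q.2.1 \ {q.2.2}))], ∅, {e (Sum.inl q.2.2)})) '' {q | q.1 ⊆ r.2.2.1 ∧ q.2.1 ⊆ ForOf G r ∧ q.2.2 ∈ q.2.1}
def S7 : Set (HRul N T) := (fun r => (HSym.chk r ∅ ∅, commitRhs r.2.1, ∅, ∅)) '' U G
def S8 : Set (HRul N T) := (fun t => (HSym.rdy (Sum.inr t), [Sum.inr t], ∅, ∅)) '' T0 G

def HR : Set (HRul N T) :=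
  S1 G ∪ S1b G ∪ S2 G ∪ S3 G ∪ S4 G ∪ S5 G ∪ S6 G ∪ S7 G ∪ S8 G

lemma N0_fin : (N0 G).Finite := by
  refine Set.Finite.insert _ (Set.Finite.biUnion G.fin fun r _ => ?_)
  refine Set.Finite.insert _ ?_
  have : {B | Sum.inl B ∈ r.2.1} = Sum.inl ⁻¹' {s | s ∈ r.2.1} := rfl
  rw [this]
  exact Set.Finite.preimage Sum.inl_injective.injOn r.2.1.finite_toSet

lemma T0_fin : (T0 G).Finite := by
  refine Set.Finite.biUnion G.fin fun r _ => ?_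
  have : {t | Sum.inr t ∈ r.2.1} = Sum.inr ⁻¹' {s | s ∈ r.2.1} := rfl
  rw [this]
  exact Set.Finite.preimage Sum.inr_injective.injOn r.2.1.finite_toSet

lemma Sig_fin : (Sig G).Finite :=
  ((N0_fin G).image _).union ((T0_fin G).image _)

lemma U_fin : (U G).Finite := G.fin.subset fun _ h => h.1

lemma ForOf_fin (r : Rul N T) : (ForOf G r).Finite :=
  (N0_fin G).subset (Set.inter_subset_right)

lemma HR_fin : (HR G).Finite := by
  have hUS : (U G ×ˢ Sig G).Finite := (U_fin G).prod (Sig_fin G)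
  refine (((((((((U_fin G).image _).union (hUS.image _)).union (hUS.image _)).union
    (hUS.image _)).union (hUS.image _)).union ?_).union ?_).union
    ((U_fin G).image _)).union ((T0_fin G).image _)
  · refine Set.Finite.biUnion (U_fin G) fun r hr => Set.Finite.image _ ?_
    refine Set.Finite.subset (hr.2.finite_subsets.prod (((ForOf_fin G r).finite_subsets).prod hr.2)) ?_
    rintro ⟨P, F, p⟩ ⟨h1, h2, h3⟩
    exact ⟨h1, h2, h1 h3⟩
  · refine Set.Finite.biUnion (U_fin G) fun r hr => Set.Finite.image _ ?_
    refine Set.Finite.subset (hr.2.finite_subsets.prod (((ForOf_fin G r).finite_subsets).prod (ForOf_fin G r))) ?_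
    rintro ⟨P, F, p⟩ ⟨h1, h2, h3⟩
    exact ⟨h1, h2, h2 h3⟩

lemma HR_ne : ∀ r ∈ HR G, r.2.1 ≠ [] := by
  rintro r hr
  rcases hr with ((((((((h | h) | h) | h) | h) | h) | h) | h) | h)
  · obtain ⟨a, ha, rfl⟩ := h; simp
  · obtain ⟨a, ha, rfl⟩ := h; simp
  · obtain ⟨a, ha, rfl⟩ := h; simp
  · obtain ⟨a, ha, rfl⟩ := h; simp
  · obtain ⟨a, ha, rfl⟩ := h; simp
  · simp only [S5, Set.mem_iUnion] at h
    obtain ⟨rr, _, a, ha, rfl⟩ := h; simp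
  · simp only [S6, Set.mem_iUnion] at h
    obtain ⟨rr, _, a, ha, rfl⟩ := h; simp
  · obtain ⟨a, ha, rfl⟩ := h
    have := G.ne a ha.1
    simp only [commitRhs]
    cases h2 : a.2.1 with
    | nil => exact absurd h2 this
    | cons b l => simp [h2, commitRhs]
  · obtain ⟨a, ha, rfl⟩ := h; simp

lemma HR_per1 : ∀ r ∈ HR G, r.2.2.1.Subsingleton := by
  rintro r hr
  rcases hr with ((((((((h | h) | h) | h) | h) | h) | h) | h) | h) <;>
    first
    | (obtain ⟨a, ha, rfl⟩ := h;
       first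
       | exact Set.subsingleton_empty
       | exact Set.subsingleton_singleton)
    | (simp only [S5, S6, Set.mem_iUnion] at h;
       obtain ⟨rr, _, a, ha, rfl⟩ := h;
       first
       | exact Set.subsingleton_empty
       | exact Set.subsingleton_singleton)

lemma HR_for1 : ∀ r ∈ HR G, r.2.2.2.Subsingleton := by
  rintro r hr
  rcases hr with ((((((((h | h) | h) | h) | h) | h) | h) | h) | h) <;>
    first
    | (obtain ⟨a, ha, rfl⟩ := h;
       first
       | exact Set.subsingleton_empty
       | exact Set.subsingleton_singleton)
    | (simp only [S5, S6, Set.mem_iUnion] at h;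
       obtain ⟨rr, _, a, ha, rfl⟩ := h;
       first
       | exact Set.subsingleton_empty
       | exact Set.subsingleton_singleton)

def H : SCG (HSym N T) T :=
  ⟨HR G, HR_fin G, HR_ne G, HR_per1 G, HR_for1 G, .rdy (Sum.inl G.start)⟩



variable {N T : Type}

lemma e_inj : Function.Injective (e : Symb N T → Symb (HSym N T) T) := by
  rintro (a | a) (b | b) h <;> simp [e] at h <;> simp [h]

lemma em_append (a b : List (Symb N T)) : em (a ++ b) = em a ++ em b :=
  List.map_append

lemma mem_em {x : Symb (HSym N T) T} {g : List (Symb N T)} :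
    x ∈ em g ↔ ∃ β ∈ g, e β = x := List.mem_map

lemma mem_em_of {β : Symb N T} {g : List (Symb N T)} (h : β ∈ g) : e β ∈ em g :=
  List.mem_map_of_mem h

lemma inl_mem_em {c : HSym N T} {g : List (Symb N T)} (h : Sum.inl c ∈ em g) :
    ∃ B, c = HSym.raw B ∧ Sum.inl B ∈ g := by
  rcases mem_em.1 h with ⟨β, hβ, hex⟩
  rcases β with B | t
  · exact ⟨B, by simpa [e] using hex.symm, hβ⟩
  · simp [e] at hex

lemma split3 {α : Type*} {X Y u v : List α} {c d : α} (h : X ++ c :: Y = u ++ d :: v) :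
    (u = X ∧ d = c ∧ v = Y) ∨ (∃ w, X = u ++ d :: w ∧ v = w ++ c :: Y) ∨
      (∃ w, u = X ++ c :: w ∧ Y = w ++ d :: v) := by
  rcases List.append_eq_append_iff.1 h with ⟨a', ha1, ha2⟩ | ⟨c', hc1, hc2⟩
  · cases a' with
    | nil => left; simp at ha1 ha2; exact ⟨ha1.symm ▸ rfl, ha2.1.symm, ha2.2.symm⟩
    | cons z t =>
        right; right
        simp at ha2
        exact ⟨t, by simp [ha1, ha2.1], ha2.2⟩
  · cases c' with
    | nil => left; simp at hc1 hc2; exact ⟨hc1 ▸ rfl, hc2.1, hc2.2⟩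
    | cons z t =>
        right; left
        simp at hc2
        exact ⟨t, by simp [hc1, hc2.1], hc2.2⟩

lemma em_split {g : List (Symb N T)} {L₁ L₂ : List (Symb (HSym N T) T)}
    {d : Symb (HSym N T) T} (h : em g = L₁ ++ d :: L₂) :
    ∃ g₁ β g₂, g = g₁ ++ β :: g₂ ∧ L₁ = em g₁ ∧ d = e β ∧ L₂ = em g₂ := by
  induction g generalizing L₁ with
  | nil => exact absurd h (by simp [em])
  | cons β g ih =>
      cases L₁ with
      | nil =>
          simp only [em, List.map_cons, List.nil_append, List.cons.injEq] at h
          exact ⟨[], β, g, rfl, rfl, h.1.symm, h.2.symm⟩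
      | cons z L =>
          simp only [em, List.map_cons, List.cons_append, List.cons.injEq] at h
          rcases ih (L₁ := L) h.2 with ⟨g₁, β', g₂, rfl, rfl, rfl, rfl⟩
          exact ⟨β :: g₁, β', g₂, rfl, by simp [em, h.1], rfl, rfl⟩

def Reach (g : List (Symb N T)) (G : RCG N T) : Prop :=
  Relation.ReflTransGen (G.Step false) [Sum.inl G.start] g

variable (G : RCG N T)

lemma rhs_alph {r : Rul N T} (hr : r ∈ G.rules) : alph r.2.1 ⊆ Sig G := by
  rintro (B | t) hx
  · exact Or.inl ⟨B, Or.inr (Set.mem_biUnion hr (Or.inr hx)), rfl⟩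
  · exact Or.inr ⟨t, Set.mem_biUnion hr hx, rfl⟩

lemma lhs_mem_N0 {r : Rul N T} (hr : r ∈ G.rules) : r.1 ∈ N0 G :=
  Or.inr (Set.mem_biUnion hr (Or.inl rfl))

lemma reach_alph {g : List (Symb N T)} (hg : Reach g G) : alph g ⊆ Sig G := by
  induction hg with
  | refl =>
      rintro x hx
      rcases List.mem_singleton.1 hx with rfl
      exact Or.inl ⟨G.start, Or.inl rfl, rfl⟩
  | tail _ hstep ih =>
      rcases hstep with ⟨A, x, Per, For, u, v, hrul, rfl, rfl, _, _⟩
      intro s hs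
      rcases List.mem_append.1 hs with hs | hs
      · rcases List.mem_append.1 hs with hs | hs
        · exact ih (by simp [alph]; exact Or.inl hs)
        · exact rhs_alph G hrul hs
      · exact ih (by simp [alph]; right; right; exact hs)

inductive Inv : List (Symb (HSym N T) T) → Prop
  | Z (g) (hg : Reach g G) : Inv (em g)
  | rdy (u α v) (hg : Reach (u ++ [α] ++ v) G) :
      Inv (em u ++ [hh (.rdy α)] ++ em v)
  | seek (u α v r) (hr : r ∈ U G) (hg : Reach (u ++ [α] ++ v) G) :
      Inv (em u ++ [hh (.seek r α)] ++ em v)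
  | duoL (u α m v r) (hr : r ∈ U G)
      (hg : Reach (u ++ [α] ++ m ++ [Sum.inl r.1] ++ v) G) :
      Inv (em u ++ [hh (.seek r α)] ++ em m ++ [hh (.pend r α)] ++ em v)
  | duoR (u α m v r) (hr : r ∈ U G)
      (hg : Reach (u ++ [Sum.inl r.1] ++ m ++ [α] ++ v) G) :
      Inv (em u ++ [hh (.pend r α)] ++ em m ++ [hh (.seek r α)] ++ em v)
  | pend (u α v r) (hr : r ∈ U G) (hg : Reach (u ++ [Sum.inl r.1] ++ v) G) :
      Inv (em u ++ [hh (.pend r α)] ++ em v)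
  | chk (u v r P F) (hr : r ∈ U G) (hP : P ⊆ r.2.2.1) (hF : F ⊆ ForOf G r)
      (hper : ∀ p ∈ r.2.2.1, p ∈ P ∨ Sum.inl p ∈ alph (u ++ v))
      (hfor : ∀ q ∈ ForOf G r, q ∈ F ∨ Sum.inl q ∉ alph (u ++ v))
      (hg : Reach (u ++ [Sum.inl r.1] ++ v) G) :
      Inv (em u ++ [hh (.chk r P F)] ++ em v)



lemma e_inl_raw {β : Symb N T} {c : HSym N T} (h : e β = Sum.inl c) :
    ∃ B, c = HSym.raw B ∧ β = Sum.inl B := by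
  rcases β with B | t
  · exact ⟨B, by simpa [e] using h.symm, rfl⟩
  · simp [e] at h

lemma locate_head {u v : List (Symb N T)} {c A : HSym N T}
    {u' v' : List (Symb (HSym N T) T)}
    (hA : ∀ B, A ≠ .raw B)
    (h : em u ++ [hh c] ++ em v = u' ++ Sum.inl A :: v') :
    A = c ∧ u' = em u ∧ v' = em v := by
  rw [List.append_assoc, List.singleton_append] at h
  rcases split3 h with ⟨h1, h2, h3⟩ | ⟨w, h1, h2⟩ | ⟨w, h1, h2⟩
  · exact ⟨Sum.inl_injective h2, h1, h3⟩
  · exfalso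
    have : Sum.inl A ∈ em u := h1 ▸ (by simp)
    rcases inl_mem_em this with ⟨B, hB, _⟩
    exact hA B hB
  · exfalso
    have : Sum.inl A ∈ em v := h2 ▸ (by simp)
    rcases inl_mem_em this with ⟨B, hB, _⟩
    exact hA B hB

lemma locate_head2 {u m v : List (Symb N T)} {c₁ c₂ A : HSym N T}
    {u' v' : List (Symb (HSym N T) T)}
    (hA : ∀ B, A ≠ .raw B)
    (h : em u ++ [hh c₁] ++ em m ++ [hh c₂] ++ em v = u' ++ Sum.inl A :: v') :
    (A = c₁ ∧ u' = em u ∧ v' = em m ++ [hh c₂] ++ em v) ∨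
    (A = c₂ ∧ u' = em u ++ [hh c₁] ++ em m ∧ v' = em v) := by
  have h' : em u ++ hh c₁ :: (em m ++ [hh c₂] ++ em v) = u' ++ Sum.inl A :: v' := by
    rw [← h]; simp [List.append_assoc]
  rcases split3 h' with ⟨h1, h2, h3⟩ | ⟨w, h1, h2⟩ | ⟨w, h1, h2⟩
  · exact Or.inl ⟨Sum.inl_injective h2, h1, h3⟩
  · exfalso
    have : Sum.inl A ∈ em u := h1 ▸ (by simp)
    rcases inl_mem_em this with ⟨B, hB, _⟩
    exact hA B hB
  · rcases locate_head hA h2 with ⟨hAc, hw, hv⟩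
    subst hw hv
    exact Or.inr ⟨hAc, by simp [h1, List.append_assoc], rfl⟩

lemma locate_raw {u v : List (Symb N T)} {c : HSym N T} {B : N}
    {u' v' : List (Symb (HSym N T) T)}
    (hc : ∀ B', c ≠ .raw B')
    (h : em u ++ [hh c] ++ em v = u' ++ Sum.inl (HSym.raw B) :: v') :
    (∃ u₁ u₂, u = u₁ ++ Sum.inl B :: u₂ ∧ u' = em u₁ ∧
        v' = em u₂ ++ [hh c] ++ em v) ∨
    (∃ v₁ v₂, v = v₁ ++ Sum.inl B :: v₂ ∧ u' = em u ++ [hh c] ++ em v₁ ∧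
        v' = em v₂) := by
  rw [List.append_assoc, List.singleton_append] at h
  rcases split3 h with ⟨h1, h2, h3⟩ | ⟨w, h1, h2⟩ | ⟨w, h1, h2⟩
  · exact absurd (Sum.inl_injective h2).symm (hc B)
  · rcases em_split h1 with ⟨u₁, β, u₂, rfl, rfl, hβ, rfl⟩
    rcases e_inl_raw hβ.symm with ⟨B', hB', rfl⟩
    obtain rfl : B = B' := by simpa [HSym.raw.injEq] using hB'
    exact Or.inl ⟨u₁, u₂, rfl, rfl, by simp [h2, List.append_assoc]⟩
  · rcases em_split h2 with ⟨v₁, β, v₂, rfl, rfl, hβ, rfl⟩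
    rcases e_inl_raw hβ.symm with ⟨B', hB', rfl⟩
    obtain rfl : B = B' := by simpa [HSym.raw.injEq] using hB'
    exact Or.inr ⟨v₁, v₂, rfl, by simp [h1, List.append_assoc], rfl⟩

lemma mem_cells1 {u v : List (Symb N T)} {c : HSym N T}
    {z : Symb (HSym N T) T} (h : z ∈ em u ++ [hh c] ++ em v) :
    z = hh c ∨ z ∈ em u ∨ z ∈ em v := by
  rcases List.mem_append.1 h with h | h
  · rcases List.mem_append.1 h with h | h
    · exact Or.inr (Or.inl h)
    · exact Or.inl (List.mem_singleton.1 h)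
  · exact Or.inr (Or.inr h)

lemma mem_cells2 {u m v : List (Symb N T)} {c₁ c₂ : HSym N T}
    {z : Symb (HSym N T) T}
    (h : z ∈ em u ++ [hh c₁] ++ em m ++ [hh c₂] ++ em v) :
    z = hh c₁ ∨ z = hh c₂ ∨ z ∈ em u ∨ z ∈ em m ∨ z ∈ em v := by
  simp only [List.mem_append, List.mem_singleton] at h
  tauto

lemma head_mem_cells1 {u v : List (Symb N T)} {c c' : HSym N T}
    (hc : ∀ B, c' ≠ .raw B) (h : hh c' ∈ em u ++ [hh c] ++ em v) :
    c' = c := by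
  rcases mem_cells1 h with h | h | h
  · exact Sum.inl_injective h
  · rcases inl_mem_em h with ⟨B, hB, _⟩; exact absurd hB (hc B)
  · rcases inl_mem_em h with ⟨B, hB, _⟩; exact absurd hB (hc B)

lemma head_mem_cells2 {u m v : List (Symb N T)} {c₁ c₂ c' : HSym N T}
    (hc : ∀ B, c' ≠ .raw B)
    (h : hh c' ∈ em u ++ [hh c₁] ++ em m ++ [hh c₂] ++ em v) :
    c' = c₁ ∨ c' = c₂ := by
  rcases mem_cells2 h with h | h | h | h | h
  · exact Or.inl (Sum.inl_injective h)
  · exact Or.inr (Sum.inl_injective h)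
  all_goals (rcases inl_mem_em h with ⟨B, hB, _⟩; exact absurd hB (hc B))



lemma em_mem_down {β : Symb N T} {g : List (Symb N T)} (h : e β ∈ em g) : β ∈ g := by
  rcases mem_em.1 h with ⟨β', hβ', hε⟩
  exact (e_inj hε) ▸ hβ'

lemma noraw_rdy (α : Symb N T) : ∀ B, HSym.rdy α ≠ HSym.raw B := fun B h => by cases h
lemma noraw_seek (r : Rul N T) (α : Symb N T) : ∀ B, HSym.seek r α ≠ HSym.raw B := fun B h => by cases h
lemma noraw_pend (r : Rul N T) (α : Symb N T) : ∀ B, HSym.pend r α ≠ HSym.raw B := fun B h => by cases h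
lemma noraw_chk (r : Rul N T) (P F : Set N) : ∀ B, HSym.chk r P F ≠ HSym.raw B := fun B h => by cases h

lemma inl_mem_sig {B : N} (h : (Sum.inl B : Symb N T) ∈ Sig G) : B ∈ N0 G := by
  rcases h with ⟨B', hB', hEq⟩ | ⟨t, _, hEq⟩
  · exact (Sum.inl_injective hEq) ▸ hB'
  · exact absurd hEq (by simp)

lemma inv_step {h1 h2 : List (Symb (HSym N T) T)} (hi : Inv G h1)
    (hst : (H G).Step true h1 h2) : Inv G h2 := by
  obtain ⟨A, x, Per, For, u', v', hrule, hs1, hs2, hPer, hFor⟩ := hst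
  rw [if_pos rfl] at hPer hFor
  subst hs2
  rcases hrule with ((((((((hm | hm) | hm) | hm) | hm) | hm) | hm) | hm) | hm)
  -- S1 : rdy (inl r.1) → chk0
  · obtain ⟨r, hrU, heq⟩ := hm
    obtain ⟨rfl, rfl, rfl, rfl⟩ : A = _ ∧ x = _ ∧ Per = _ ∧ For = _ := by
      simpa [Prod.mk.injEq, eq_comm] using heq.symm
    cases hi with
    | Z g hg =>
        rcases em_split hs1 with ⟨g₁, β, g₂, _, _, hβ, _⟩
        rcases e_inl_raw hβ.symm with ⟨B, hB, _⟩; simp at hB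
    | rdy u α v hg =>
        rcases locate_head (noraw_rdy _) hs1 with ⟨hAc, rfl, rfl⟩
        obtain rfl : (Sum.inl r.1 : Symb N T) = α := by
          simpa [HSym.rdy.injEq] using hAc
        exact Inv.chk u v r r.2.2.1 (ForOf G r) hrU (fun _ h => h) (fun _ h => h)
          (fun p hp => Or.inl hp) (fun q hq => Or.inl hq) hg
    | seek u α v r₀ hr₀ hg =>
        rcases locate_head (noraw_rdy _) hs1 with ⟨hAc, -, -⟩; simp at hAc
    | duoL u α m v r₀ hr₀ hg =>
        rcases locate_head2 (noraw_rdy _) hs1 with ⟨hAc, -, -⟩ | ⟨hAc, -, -⟩ <;> simp at hAc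
    | duoR u α m v r₀ hr₀ hg =>
        rcases locate_head2 (noraw_rdy _) hs1 with ⟨hAc, -, -⟩ | ⟨hAc, -, -⟩ <;> simp at hAc
    | pend u α v r₀ hr₀ hg =>
        rcases locate_head (noraw_rdy _) hs1 with ⟨hAc, -, -⟩; simp at hAc
    | chk u v r₀ P₀ F₀ hr₀ hP hF hper hfor hg =>
        rcases locate_head (noraw_rdy _) hs1 with ⟨hAc, -, -⟩; simp at hAc
  -- S1b : rdy α → seek r α
  · obtain ⟨p, hpU, heq⟩ := hm
    obtain ⟨rfl, rfl, rfl, rfl⟩ : A = _ ∧ x = _ ∧ Per = _ ∧ For = _ := by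
      simpa [Prod.mk.injEq, eq_comm] using heq.symm
    cases hi with
    | Z g hg =>
        rcases em_split hs1 with ⟨g₁, β, g₂, _, _, hβ, _⟩
        rcases e_inl_raw hβ.symm with ⟨B, hB, _⟩; simp at hB
    | rdy u α v hg =>
        rcases locate_head (noraw_rdy _) hs1 with ⟨hAc, rfl, rfl⟩
        obtain rfl : p.2 = α := by simpa [HSym.rdy.injEq] using hAc
        exact Inv.seek u p.2 v p.1 hpU.1 hg
    | seek u α v r₀ hr₀ hg =>
        rcases locate_head (noraw_rdy _) hs1 with ⟨hAc, -, -⟩; simp at hAc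
    | duoL u α m v r₀ hr₀ hg =>
        rcases locate_head2 (noraw_rdy _) hs1 with ⟨hAc, -, -⟩ | ⟨hAc, -, -⟩ <;> simp at hAc
    | duoR u α m v r₀ hr₀ hg =>
        rcases locate_head2 (noraw_rdy _) hs1 with ⟨hAc, -, -⟩ | ⟨hAc, -, -⟩ <;> simp at hAc
    | pend u α v r₀ hr₀ hg =>
        rcases locate_head (noraw_rdy _) hs1 with ⟨hAc, -, -⟩; simp at hAc
    | chk u v r₀ P₀ F₀ hr₀ hP hF hper hfor hg =>
        rcases locate_head (noraw_rdy _) hs1 with ⟨hAc, -, -⟩; simp at hAc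
  -- S2 : raw r.1 → pend r α  (requires seek present, pend absent)
  · obtain ⟨p, hpU, heq⟩ := hm
    obtain ⟨rfl, rfl, rfl, rfl⟩ : A = _ ∧ x = _ ∧ Per = _ ∧ For = _ := by
      simpa [Prod.mk.injEq, eq_comm] using heq.symm
    have hseek : hh (HSym.seek p.1 p.2) ∈ h1 := hPer rfl
    cases hi with
    | Z g hg =>
        rcases inl_mem_em hseek with ⟨B, hB, _⟩; simp at hB
    | rdy u α v hg =>
        have := head_mem_cells1 (noraw_seek _ _) hseek; simp at this
    | seek u α v r₀ hr₀ hg =>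
        have hmatch := head_mem_cells1 (noraw_seek _ _) hseek
        obtain ⟨rfl, rfl⟩ : p.1 = r₀ ∧ p.2 = α := by
          simpa [HSym.seek.injEq] using hmatch
        rcases locate_raw (noraw_seek _ _) hs1 with
          ⟨u₁, u₂, rfl, rfl, rfl⟩ | ⟨v₁, v₂, rfl, rfl, rfl⟩
        · have := Inv.duoR u₁ p.2 u₂ v p.1 hr₀ (by simpa [List.append_assoc] using hg)
          simpa [List.append_assoc] using this
        · have := Inv.duoL u p.2 v₁ v₂ p.1 hr₀ (by simpa [List.append_assoc] using hg)
          simpa [List.append_assoc] using this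
    | duoL u α m v r₀ hr₀ hg =>
        have hmatch := head_mem_cells2 (noraw_seek _ _) hseek
        obtain ⟨rfl, rfl⟩ : p.1 = r₀ ∧ p.2 = α := by
          simpa [HSym.seek.injEq] using hmatch
        exact absurd (hFor _ rfl (by simp [alph])) not_false
    | duoR u α m v r₀ hr₀ hg =>
        have hmatch := head_mem_cells2 (noraw_seek _ _) hseek
        obtain ⟨rfl, rfl⟩ : p.1 = r₀ ∧ p.2 = α := by
          simpa [HSym.seek.injEq] using hmatch
        exact absurd (hFor _ rfl (by simp [alph])) not_false
    | pend u α v r₀ hr₀ hg =>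
        have := head_mem_cells1 (noraw_seek _ _) hseek; simp at this
    | chk u v r₀ P₀ F₀ hr₀ hP hF hper hfor hg =>
        have := head_mem_cells1 (noraw_seek _ _) hseek; simp at this
  -- S3 : seek r α → e α  (requires pend present)
  · obtain ⟨p, hpU, heq⟩ := hm
    obtain ⟨rfl, rfl, rfl, rfl⟩ : A = _ ∧ x = _ ∧ Per = _ ∧ For = _ := by
      simpa [Prod.mk.injEq, eq_comm] using heq.symm
    have hpend : hh (HSym.pend p.1 p.2) ∈ h1 := hPer rfl
    cases hi with
    | Z g hg =>
        rcases em_split hs1 with ⟨g₁, β, g₂, _, _, hβ, _⟩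
        rcases e_inl_raw hβ.symm with ⟨B, hB, _⟩; simp at hB
    | rdy u α v hg =>
        rcases locate_head (noraw_seek _ _) hs1 with ⟨hAc, -, -⟩; simp at hAc
    | seek u α v r₀ hr₀ hg =>
        have := head_mem_cells1 (noraw_pend _ _) hpend; simp at this
    | duoL u α m v r₀ hr₀ hg =>
        rcases locate_head2 (noraw_seek _ _) hs1 with ⟨hAc, rfl, rfl⟩ | ⟨hAc, -, -⟩
        · obtain ⟨rfl, rfl⟩ : p.1 = r₀ ∧ p.2 = α := by
            simpa [HSym.seek.injEq] using hAc
          have := Inv.pend (u ++ [p.2] ++ m) p.2 v p.1 hr₀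
            (by simpa [List.append_assoc] using hg)
          simpa [em_append, List.append_assoc, em] using this
        · simp at hAc
    | duoR u α m v r₀ hr₀ hg =>
        rcases locate_head2 (noraw_seek _ _) hs1 with ⟨hAc, -, -⟩ | ⟨hAc, rfl, rfl⟩
        · simp at hAc
        · obtain ⟨rfl, rfl⟩ : p.1 = r₀ ∧ p.2 = α := by
            simpa [HSym.seek.injEq] using hAc
          have := Inv.pend u p.2 (m ++ [p.2] ++ v) p.1 hr₀
            (by simpa [List.append_assoc] using hg)
          simpa [em_append, List.append_assoc, em] using this
    | pend u α v r₀ hr₀ hg =>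
        rcases locate_head (noraw_seek _ _) hs1 with ⟨hAc, -, -⟩; simp at hAc
    | chk u v r₀ P₀ F₀ hr₀ hP hF hper hfor hg =>
        rcases locate_head (noraw_seek _ _) hs1 with ⟨hAc, -, -⟩; simp at hAc
  -- S4 : pend r α → chk0 r  (requires seek absent)
  · obtain ⟨p, hpU, heq⟩ := hm
    obtain ⟨rfl, rfl, rfl, rfl⟩ : A = _ ∧ x = _ ∧ Per = _ ∧ For = _ := by
      simpa [Prod.mk.injEq, eq_comm] using heq.symm
    cases hi with
    | Z g hg =>
        rcases em_split hs1 with ⟨g₁, β, g₂, _, _, hβ, _⟩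
        rcases e_inl_raw hβ.symm with ⟨B, hB, _⟩; simp at hB
    | rdy u α v hg =>
        rcases locate_head (noraw_pend _ _) hs1 with ⟨hAc, -, -⟩; simp at hAc
    | seek u α v r₀ hr₀ hg =>
        rcases locate_head (noraw_pend _ _) hs1 with ⟨hAc, -, -⟩; simp at hAc
    | duoL u α m v r₀ hr₀ hg =>
        rcases locate_head2 (noraw_pend _ _) hs1 with ⟨hAc, -, -⟩ | ⟨hAc, -, -⟩
        · simp at hAc
        · obtain ⟨rfl, rfl⟩ : p.1 = r₀ ∧ p.2 = α := by
            simpa [HSym.pend.injEq] using hAc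
          exact absurd (hFor _ rfl (by simp [alph])) not_false
    | duoR u α m v r₀ hr₀ hg =>
        rcases locate_head2 (noraw_pend _ _) hs1 with ⟨hAc, -, -⟩ | ⟨hAc, -, -⟩
        · obtain ⟨rfl, rfl⟩ : p.1 = r₀ ∧ p.2 = α := by
            simpa [HSym.pend.injEq] using hAc
          exact absurd (hFor _ rfl (by simp [alph])) not_false
        · simp at hAc
    | pend u α v r₀ hr₀ hg =>
        rcases locate_head (noraw_pend _ _) hs1 with ⟨hAc, rfl, rfl⟩
        obtain ⟨rfl, rfl⟩ : p.1 = r₀ ∧ p.2 = α := by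
          simpa [HSym.pend.injEq] using hAc
        exact Inv.chk u v p.1 p.1.2.2.1 (ForOf G p.1) hr₀ (fun _ h => h) (fun _ h => h)
          (fun q hq => Or.inl hq) (fun q hq => Or.inl hq) hg
    | chk u v r₀ P₀ F₀ hr₀ hP hF hper hfor hg =>
        rcases locate_head (noraw_pend _ _) hs1 with ⟨hAc, -, -⟩; simp at hAc
  -- S5 : permit check
  · simp only [S5, Set.mem_iUnion] at hm
    obtain ⟨r, hrU, q, hq, heq⟩ := hm
    obtain ⟨rfl, rfl, rfl, rfl⟩ : A = _ ∧ x = _ ∧ Per = _ ∧ For = _ := by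
      simpa [Prod.mk.injEq, eq_comm] using heq.symm
    cases hi with
    | Z g hg =>
        rcases em_split hs1 with ⟨g₁, β, g₂, _, _, hβ, _⟩
        rcases e_inl_raw hβ.symm with ⟨B, hB, _⟩; simp at hB
    | rdy u α v hg =>
        rcases locate_head (noraw_chk _ _ _) hs1 with ⟨hAc, -, -⟩; simp at hAc
    | seek u α v r₀ hr₀ hg =>
        rcases locate_head (noraw_chk _ _ _) hs1 with ⟨hAc, -, -⟩; simp at hAc
    | duoL u α m v r₀ hr₀ hg =>
        rcases locate_head2 (noraw_chk _ _ _) hs1 with ⟨hAc, -, -⟩ | ⟨hAc, -, -⟩ <;> simp at hAc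
    | duoR u α m v r₀ hr₀ hg =>
        rcases locate_head2 (noraw_chk _ _ _) hs1 with ⟨hAc, -, -⟩ | ⟨hAc, -, -⟩ <;> simp at hAc
    | pend u α v r₀ hr₀ hg =>
        rcases locate_head (noraw_chk _ _ _) hs1 with ⟨hAc, -, -⟩; simp at hAc
    | chk u v r₀ P₀ F₀ hr₀ hP hF hper hfor hg =>
        rcases locate_head (noraw_chk _ _ _) hs1 with ⟨hAc, rfl, rfl⟩
        obtain ⟨rfl, rfl, rfl⟩ : r = r₀ ∧ q.1 = P₀ ∧ q.2.1 = F₀ := by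
          simpa [HSym.chk.injEq] using hAc
        have hp' : Sum.inl q.2.2 ∈ alph (u ++ v) := by
          have hmm : e (Sum.inl q.2.2) ∈ em u ++ [hh (HSym.chk r q.1 q.2.1)] ++ em v :=
            hPer rfl
          rcases mem_cells1 hmm with h | h | h
          · simp [e] at h
          · exact List.mem_append.2 (Or.inl (em_mem_down h))
          · exact List.mem_append.2 (Or.inr (em_mem_down h))
        refine Inv.chk u v r (q.1 \ {q.2.2}) q.2.1 hrU
          (fun z hz => hP hz.1) hF (fun p' hp'' => ?_) hfor hg
        by_cases hpp : p' = q.2.2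
        · exact Or.inr (hpp ▸ hp')
        · rcases hper p' hp'' with h | h
          · exact Or.inl ⟨h, by simp [hpp]⟩
          · exact Or.inr h
  -- S6 : forbid check
  · simp only [S6, Set.mem_iUnion] at hm
    obtain ⟨r, hrU, q, hq, heq⟩ := hm
    obtain ⟨rfl, rfl, rfl, rfl⟩ : A = _ ∧ x = _ ∧ Per = _ ∧ For = _ := by
      simpa [Prod.mk.injEq, eq_comm] using heq.symm
    cases hi with
    | Z g hg =>
        rcases em_split hs1 with ⟨g₁, β, g₂, _, _, hβ, _⟩
        rcases e_inl_raw hβ.symm with ⟨B, hB, _⟩; simp at hB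
    | rdy u α v hg =>
        rcases locate_head (noraw_chk _ _ _) hs1 with ⟨hAc, -, -⟩; simp at hAc
    | seek u α v r₀ hr₀ hg =>
        rcases locate_head (noraw_chk _ _ _) hs1 with ⟨hAc, -, -⟩; simp at hAc
    | duoL u α m v r₀ hr₀ hg =>
        rcases locate_head2 (noraw_chk _ _ _) hs1 with ⟨hAc, -, -⟩ | ⟨hAc, -, -⟩ <;> simp at hAc
    | duoR u α m v r₀ hr₀ hg =>
        rcases locate_head2 (noraw_chk _ _ _) hs1 with ⟨hAc, -, -⟩ | ⟨hAc, -, -⟩ <;> simp at hAc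
    | pend u α v r₀ hr₀ hg =>
        rcases locate_head (noraw_chk _ _ _) hs1 with ⟨hAc, -, -⟩; simp at hAc
    | chk u v r₀ P₀ F₀ hr₀ hP hF hper hfor hg =>
        rcases locate_head (noraw_chk _ _ _) hs1 with ⟨hAc, rfl, rfl⟩
        obtain ⟨rfl, rfl, rfl⟩ : r = r₀ ∧ q.1 = P₀ ∧ q.2.1 = F₀ := by
          simpa [HSym.chk.injEq] using hAc
        have hq' : Sum.inl q.2.2 ∉ alph (u ++ v) := by
          intro hcon
          refine absurd (a := e (Sum.inl q.2.2) ∈ em u ++ [hh (HSym.chk r q.1 q.2.1)] ++ em v) ?_ (hFor _ rfl)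
          rcases List.mem_append.1 hcon with h | h
          · exact List.mem_append.2 (Or.inl (List.mem_append.2 (Or.inl (mem_em_of h))))
          · exact List.mem_append.2 (Or.inr (mem_em_of h))
        refine Inv.chk u v r q.1 (q.2.1 \ {q.2.2}) hrU hP
          (fun z hz => hF hz.1) hper (fun q' hq'' => ?_) hg
        by_cases hqq : q' = q.2.2
        · exact Or.inr (hqq ▸ hq')
        · rcases hfor q' hq'' with h | h
          · exact Or.inl ⟨h, by simp [hqq]⟩
          · exact Or.inr h
  -- S7 : commit
  · obtain ⟨r, hrU, heq⟩ := hm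
    obtain ⟨rfl, rfl, rfl, rfl⟩ : A = _ ∧ x = _ ∧ Per = _ ∧ For = _ := by
      simpa [Prod.mk.injEq, eq_comm] using heq.symm
    cases hi with
    | Z g hg =>
        rcases em_split hs1 with ⟨g₁, β, g₂, _, _, hβ, _⟩
        rcases e_inl_raw hβ.symm with ⟨B, hB, _⟩; simp at hB
    | rdy u α v hg =>
        rcases locate_head (noraw_chk _ _ _) hs1 with ⟨hAc, -, -⟩; simp at hAc
    | seek u α v r₀ hr₀ hg =>
        rcases locate_head (noraw_chk _ _ _) hs1 with ⟨hAc, -, -⟩; simp at hAc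
    | duoL u α m v r₀ hr₀ hg =>
        rcases locate_head2 (noraw_chk _ _ _) hs1 with ⟨hAc, -, -⟩ | ⟨hAc, -, -⟩ <;> simp at hAc
    | duoR u α m v r₀ hr₀ hg =>
        rcases locate_head2 (noraw_chk _ _ _) hs1 with ⟨hAc, -, -⟩ | ⟨hAc, -, -⟩ <;> simp at hAc
    | pend u α v r₀ hr₀ hg =>
        rcases locate_head (noraw_chk _ _ _) hs1 with ⟨hAc, -, -⟩; simp at hAc
    | chk u v r₀ P₀ F₀ hr₀ hP hF hper hfor hg =>
        rcases locate_head (noraw_chk _ _ _) hs1 with ⟨hAc, rfl, rfl⟩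
        obtain ⟨rfl, hP0, hF0⟩ : r = r₀ ∧ (∅ : Set N) = P₀ ∧ (∅ : Set N) = F₀ := by
          simpa [HSym.chk.injEq] using hAc
        subst hP0 hF0
        have hper' : ∀ p ∈ r.2.2.1, Sum.inl p ∈ alph (u ++ v) := by
          intro p hp; rcases hper p hp with h | h
          · exact absurd h (Set.notMem_empty _)
          · exact h
        have hfor' : ∀ q ∈ r.2.2.2, Sum.inl q ∉ alph (u ++ v) := by
          intro q hqf hcon
          by_cases hq0 : q ∈ N0 G
          · rcases hfor q ⟨hqf, hq0⟩ with h | h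
            · exact Set.notMem_empty _ h
            · exact h hcon
          · refine hq0 (inl_mem_sig G (reach_alph G hg ?_))
            rcases List.mem_append.1 hcon with h | h
            · exact List.mem_append.2 (Or.inl (List.mem_append.2 (Or.inl h)))
            · exact List.mem_append.2 (Or.inr h)
        have hstep : G.Step false (u ++ [Sum.inl r.1] ++ v) (u ++ r.2.1 ++ v) := by
          refine ⟨r.1, r.2.1, r.2.2.1, r.2.2.2, u, v, hrU.1, by simp, rfl, ?_, ?_⟩
          · intro B hB; rw [if_neg (by simp)]; exact hper' B hB
          · intro B hB; rw [if_neg (by simp)]; exact hfor' B hB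
        have hg' : Reach (u ++ r.2.1 ++ v) G := hg.tail hstep
        obtain ⟨a, t, hx⟩ : ∃ a t, r.2.1 = a :: t := by
          cases hxx : r.2.1 with
          | nil => exact absurd hxx (G.ne r hrU.1)
          | cons a t => exact ⟨a, t, rfl⟩
        have := Inv.rdy u a (t ++ v) (by rw [hx] at hg'; simpa [List.append_assoc] using hg')
        rw [hx]
        simpa [commitRhs, em_append, List.append_assoc] using this
  -- S8 : final dissolve
  · obtain ⟨t, htT, heq⟩ := hm
    obtain ⟨rfl, rfl, rfl, rfl⟩ : A = _ ∧ x = _ ∧ Per = _ ∧ For = _ := by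
      simpa [Prod.mk.injEq, eq_comm] using heq.symm
    cases hi with
    | Z g hg =>
        rcases em_split hs1 with ⟨g₁, β, g₂, _, _, hβ, _⟩
        rcases e_inl_raw hβ.symm with ⟨B, hB, _⟩; simp at hB
    | rdy u α v hg =>
        rcases locate_head (noraw_rdy _) hs1 with ⟨hAc, rfl, rfl⟩
        obtain rfl : (Sum.inr t : Symb N T) = α := by
          simpa [HSym.rdy.injEq] using hAc
        have := Inv.Z (u ++ [Sum.inr t] ++ v) hg
        simpa [em_append, em, e] using this
    | seek u α v r₀ hr₀ hg =>
        rcases locate_head (noraw_rdy _) hs1 with ⟨hAc, -, -⟩; simp at hAc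
    | duoL u α m v r₀ hr₀ hg =>
        rcases locate_head2 (noraw_rdy _) hs1 with ⟨hAc, -, -⟩ | ⟨hAc, -, -⟩ <;> simp at hAc
    | duoR u α m v r₀ hr₀ hg =>
        rcases locate_head2 (noraw_rdy _) hs1 with ⟨hAc, -, -⟩ | ⟨hAc, -, -⟩ <;> simp at hAc
    | pend u α v r₀ hr₀ hg =>
        rcases locate_head (noraw_rdy _) hs1 with ⟨hAc, -, -⟩; simp at hAc
    | chk u v r₀ P₀ F₀ hr₀ hP hF hper hfor hg =>
        rcases locate_head (noraw_rdy _) hs1 with ⟨hAc, -, -⟩; simp at hAc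



@[simp] lemma hh_mem_em_iff {c : HSym N T} {g : List (Symb N T)} :
    (Sum.inl c ∈ em g) ↔ ∃ B, c = HSym.raw B ∧ Sum.inl B ∈ g := by
  constructor
  · exact fun h => by rcases inl_mem_em h with ⟨B, hB, hB2⟩; exact ⟨B, hB, hB2⟩
  · rintro ⟨B, rfl, h⟩
    have : e (Sum.inl B) ∈ em g := mem_em_of h
    simpa [e] using this

lemma em_eq_inr {g : List (Symb N T)} {w : List T}
    (h : em g = w.map Sum.inr) : g = w.map Sum.inr := by
  induction g generalizing w with
  | nil => cases w with
    | nil => rfl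
    | cons a w => simp [em] at h
  | cons β g ih =>
      cases w with
      | nil => simp [em] at h
      | cons a w =>
          simp only [em, List.map_cons, List.cons.injEq] at h ⊢
          rcases β with B | t
          · simp [e] at h
          · obtain rfl : t = a := by simpa [e] using h.1
            exact ⟨rfl, ih h.2⟩

lemma inv_of_hreach {h : List (Symb (HSym N T) T)}
    (hr : Relation.ReflTransGen ((H G).Step true) [Sum.inl (H G).start] h) :
    Inv G h := by
  induction hr with
  | refl =>
      have : Inv G (em ([] : List (Symb N T)) ++ [hh (.rdy (Sum.inl G.start))]
          ++ em ([] : List (Symb N T))) :=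
        Inv.rdy [] (Sum.inl G.start) [] (by simpa [Reach] using Relation.ReflTransGen.refl)
      simpa [em, H] using this
  | tail _ hstep ih => exact inv_step G ih hstep

lemma sound : (H G).Lang true ⊆ G.Lang false := by
  intro w hw
  have hi := inv_of_hreach G hw
  generalize hL : (List.map Sum.inr w : List (Symb (HSym N T) T)) = L at hi
  have hnol : ∀ c : HSym N T, Sum.inl c ∉ L := by
    rintro c hc
    rw [← hL] at hc
    rcases List.mem_map.1 hc with ⟨t, _, ht⟩
    simp at ht
  cases hi with
  | Z g hg =>
      obtain rfl : g = w.map Sum.inr := em_eq_inr (by rw [hL])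
      exact hg
  | rdy u α v hg => exact absurd (by simp : hh (.rdy α) ∈ _) (hnol _)
  | seek u α v r₀ _ _ => exact absurd (by simp : hh (.seek r₀ α) ∈ _) (hnol _)
  | duoL u α m v r₀ _ _ => exact absurd (by simp : hh (.seek r₀ α) ∈ _) (hnol _)
  | duoR u α m v r₀ _ _ => exact absurd (by simp : hh (.seek r₀ α) ∈ _) (hnol _)
  | pend u α v r₀ _ _ => exact absurd (by simp : hh (.pend r₀ α) ∈ _) (hnol _)
  | chk u v r₀ P₀ F₀ _ _ _ _ _ _ =>
      exact absurd (by simp : hh (.chk r₀ P₀ F₀) ∈ _) (hnol _)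

-- membership helpers
lemma mem_S1 {r : Rul N T} (hr : r ∈ U G) :
    ((HSym.rdy (Sum.inl r.1) : HSym N T), [hh (chk0 G r)],
      (∅ : Set (Symb (HSym N T) T)), (∅ : Set (Symb (HSym N T) T))) ∈ HR G := by
  left; left; left; left; left; left; left; left; exact ⟨r, hr, rfl⟩

lemma mem_S1b {r : Rul N T} {α : Symb N T} (hr : r ∈ U G) (hα : α ∈ Sig G) :
    ((HSym.rdy α : HSym N T), [hh (.seek r α)],
      (∅ : Set (Symb (HSym N T) T)), (∅ : Set (Symb (HSym N T) T))) ∈ HR G := by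
  left; left; left; left; left; left; left; right; exact ⟨(r, α), ⟨hr, hα⟩, rfl⟩

lemma mem_S2 {r : Rul N T} {α : Symb N T} (hr : r ∈ U G) (hα : α ∈ Sig G) :
    ((HSym.raw r.1 : HSym N T), [hh (.pend r α)],
      ({hh (.seek r α)} : Set (Symb (HSym N T) T)),
      ({hh (.pend r α)} : Set (Symb (HSym N T) T))) ∈ HR G := by
  left; left; left; left; left; left; right; exact ⟨(r, α), ⟨hr, hα⟩, rfl⟩

lemma mem_S3 {r : Rul N T} {α : Symb N T} (hr : r ∈ U G) (hα : α ∈ Sig G) :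
    ((HSym.seek r α : HSym N T), [e α],
      ({hh (.pend r α)} : Set (Symb (HSym N T) T)),
      (∅ : Set (Symb (HSym N T) T))) ∈ HR G := by
  left; left; left; left; left; right; exact ⟨(r, α), ⟨hr, hα⟩, rfl⟩

lemma mem_S4 {r : Rul N T} {α : Symb N T} (hr : r ∈ U G) (hα : α ∈ Sig G) :
    ((HSym.pend r α : HSym N T), [hh (chk0 G r)],
      (∅ : Set (Symb (HSym N T) T)),
      ({hh (.seek r α)} : Set (Symb (HSym N T) T))) ∈ HR G := by
  left; left; left; left; right; exact ⟨(r, α), ⟨hr, hα⟩, rfl⟩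

lemma mem_S5 {r : Rul N T} {P F : Set N} {p : N} (hr : r ∈ U G)
    (hP : P ⊆ r.2.2.1) (hF : F ⊆ ForOf G r) (hp : p ∈ P) :
    ((HSym.chk r P F : HSym N T), [hh (.chk r (P \ {p}) F)],
      ({e (Sum.inl p)} : Set (Symb (HSym N T) T)),
      (∅ : Set (Symb (HSym N T) T))) ∈ HR G := by
  left; left; left; right
  simp only [S5, Set.mem_iUnion]
  exact ⟨r, hr, (P, F, p), ⟨hP, hF, hp⟩, rfl⟩

lemma mem_S6 {r : Rul N T} {P F : Set N} {q : N} (hr : r ∈ U G)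
    (hP : P ⊆ r.2.2.1) (hF : F ⊆ ForOf G r) (hq : q ∈ F) :
    ((HSym.chk r P F : HSym N T), [hh (.chk r P (F \ {q}))],
      (∅ : Set (Symb (HSym N T) T)),
      ({e (Sum.inl q)} : Set (Symb (HSym N T) T))) ∈ HR G := by
  left; left; right
  simp only [S6, Set.mem_iUnion]
  exact ⟨r, hr, (P, F, q), ⟨hP, hF, hq⟩, rfl⟩

lemma mem_S7 {r : Rul N T} (hr : r ∈ U G) :
    ((HSym.chk r ∅ ∅ : HSym N T), commitRhs r.2.1,
      (∅ : Set (Symb (HSym N T) T)), (∅ : Set (Symb (HSym N T) T))) ∈ HR G := by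
  left; right; exact ⟨r, hr, rfl⟩

lemma mem_S8 {t : T} (ht : t ∈ T0 G) :
    ((HSym.rdy (Sum.inr t) : HSym N T), [(Sum.inr t : Symb (HSym N T) T)],
      (∅ : Set (Symb (HSym N T) T)), (∅ : Set (Symb (HSym N T) T))) ∈ HR G := by
  right; exact ⟨t, ht, rfl⟩

lemma hstep_mk {A : HSym N T} {x : List (Symb (HSym N T) T)}
    {Per For : Set (Symb (HSym N T) T)} {s₁ s₂ u v : List (Symb (HSym N T) T)}
    (hr : (A, x, Per, For) ∈ HR G)
    (h1 : s₁ = u ++ Sum.inl A :: v) (h2 : s₂ = u ++ x ++ v)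
    (hPer : Per ⊆ alph s₁) (hFor : ∀ a ∈ For, a ∉ alph s₁) :
    (H G).Step true s₁ s₂ :=
  ⟨A, x, Per, For, u, v, hr, h1, h2, by rw [if_pos rfl]; exact hPer,
    by rw [if_pos rfl]; exact hFor⟩



@[simp] lemma inl_eq_e_iff {α : Symb N T} {c : HSym N T} :
    (Sum.inl c = e α) ↔ ∃ B, α = Sum.inl B ∧ c = HSym.raw B := by
  cases α <;> simp [e] <;> exact comm

@[simp] lemma e_eq_inl_iff {α : Symb N T} {c : HSym N T} :
    (e α = Sum.inl c) ↔ ∃ B, α = Sum.inl B ∧ c = HSym.raw B := by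
  rw [eq_comm]; exact inl_eq_e_iff

@[simp] lemma em_nil : em ([] : List (Symb N T)) = [] := rfl
@[simp] lemma em_cons (a : Symb N T) (l : List (Symb N T)) : em (a :: l) = e a :: em l := rfl
@[simp] lemma e_inl (B : N) : (e (Sum.inl B) : Symb (HSym N T) T) = Sum.inl (HSym.raw B) := rfl
@[simp] lemma e_inr (t : T) : (e (Sum.inr t) : Symb (HSym N T) T) = Sum.inr t := rfl

lemma raw_mem_pattern {p : N} {u v : List (Symb N T)} {c : HSym N T}
    (h : Sum.inl p ∈ alph (u ++ v)) :
    e (Sum.inl p) ∈ alph (em u ++ [hh c] ++ em v) := by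
  rcases List.mem_append.1 h with h | h
  · exact List.mem_append.2 (Or.inl (List.mem_append.2 (Or.inl (mem_em_of h))))
  · exact List.mem_append.2 (Or.inr (mem_em_of h))

lemma raw_notmem_pattern {q : N} {u v : List (Symb N T)} {c : HSym N T}
    (hc : ∀ B, c ≠ .raw B) (h : Sum.inl q ∉ alph (u ++ v)) :
    e (Sum.inl q) ∉ alph (em u ++ [hh c] ++ em v) := by
  intro hcon
  rcases mem_cells1 hcon with h' | h' | h'
  · rcases e_inl_raw h' with ⟨B, hB, _⟩; exact hc B hB
  · exact h (List.mem_append.2 (Or.inl (em_mem_down h')))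
  · exact h (List.mem_append.2 (Or.inr (em_mem_down h')))

lemma per_chain (u v : List (Symb N T)) (r : Rul N T) (hr : r ∈ U G) (F : Set N)
    (hF : F ⊆ ForOf G r) {P : Set N} (hPfin : P.Finite) (hPsub : P ⊆ r.2.2.1)
    (hPpres : ∀ p ∈ P, Sum.inl p ∈ alph (u ++ v)) :
    Relation.ReflTransGen ((H G).Step true)
      (em u ++ [hh (.chk r P F)] ++ em v) (em u ++ [hh (.chk r ∅ F)] ++ em v) := by
  revert hPsub hPpres
  refine Set.Finite.induction_on
    (motive := fun P _ => P ⊆ r.2.2.1 → (∀ p ∈ P, Sum.inl p ∈ alph (u ++ v)) →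
      Relation.ReflTransGen ((H G).Step true)
        (em u ++ [hh (.chk r P F)] ++ em v) (em u ++ [hh (.chk r ∅ F)] ++ em v))
    _ hPfin (fun _ _ => Relation.ReflTransGen.refl) ?_
  rintro a s ha hs ih hPsub hPpres
  have hstep : (H G).Step true (em u ++ [hh (.chk r (insert a s) F)] ++ em v)
      (em u ++ [hh (.chk r ((insert a s) \ {a}) F)] ++ em v) := by
    refine hstep_mk G (u := em u) (v := em v) (mem_S5 G hr hPsub hF (Set.mem_insert a s))
      (by simp) (by simp) ?_ (by simp)
    refine Set.singleton_subset_iff.2 (raw_mem_pattern ?_)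
    exact hPpres a (Set.mem_insert a s)
  rw [Set.insert_diff_self_of_notMem ha] at hstep
  exact Relation.ReflTransGen.head hstep
    (ih (fun z hz => hPsub (Set.mem_insert_of_mem a hz))
      (fun z hz => hPpres z (Set.mem_insert_of_mem a hz)))

lemma for_chain (u v : List (Symb N T)) (r : Rul N T) (hr : r ∈ U G)
    {F : Set N} (hFfin : F.Finite) (hFsub : F ⊆ ForOf G r)
    (hFabs : ∀ q ∈ F, Sum.inl q ∉ alph (u ++ v)) :
    Relation.ReflTransGen ((H G).Step true)
      (em u ++ [hh (.chk r ∅ F)] ++ em v) (em u ++ [hh (.chk r ∅ ∅)] ++ em v) := by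
  revert hFsub hFabs
  refine Set.Finite.induction_on
    (motive := fun F _ => F ⊆ ForOf G r → (∀ q ∈ F, Sum.inl q ∉ alph (u ++ v)) →
      Relation.ReflTransGen ((H G).Step true)
        (em u ++ [hh (.chk r ∅ F)] ++ em v) (em u ++ [hh (.chk r ∅ ∅)] ++ em v))
    _ hFfin (fun _ _ => Relation.ReflTransGen.refl) ?_
  rintro a s ha hs ih hFsub hFabs
  have hstep : (H G).Step true (em u ++ [hh (.chk r ∅ (insert a s))] ++ em v)
      (em u ++ [hh (.chk r ∅ ((insert a s) \ {a}))] ++ em v) := by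
    refine hstep_mk G (u := em u) (v := em v) (mem_S6 G (P := ∅) hr (Set.empty_subset _) hFsub (Set.mem_insert a s))
      (by simp) (by simp) (by simp) ?_
    rintro z rfl
    exact raw_notmem_pattern (noraw_chk _ _ _) (hFabs a (Set.mem_insert a s))
  rw [Set.insert_diff_self_of_notMem ha] at hstep
  exact Relation.ReflTransGen.head hstep
    (ih (fun z hz => hFsub (Set.mem_insert_of_mem a hz))
      (fun z hz => hFabs z (Set.mem_insert_of_mem a hz)))

/-- From a `chk0` configuration with all conditions of `r` satisfied (exclusively),
reach the committed configuration. -/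
lemma engine (u v : List (Symb N T)) (r : Rul N T) (hr : r ∈ U G)
    (hPpres : ∀ p ∈ r.2.2.1, Sum.inl p ∈ alph (u ++ v))
    (hFabs : ∀ q ∈ r.2.2.2, Sum.inl q ∉ alph (u ++ v)) :
    Relation.ReflTransGen ((H G).Step true)
      (em u ++ [hh (chk0 G r)] ++ em v) (em u ++ commitRhs r.2.1 ++ em v) := by
  have h1 := per_chain G u v r hr (ForOf G r) (fun _ h => h) hr.2 (fun _ h => h) hPpres
  have h2 := for_chain G u v r hr ((ForOf_fin G r)) (fun _ h => h)
    (fun q hq => hFabs q hq.1)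
  refine (h1.trans h2).tail ?_
  exact hstep_mk G (u := em u) (v := em v) (mem_S7 G hr) (by simp) rfl (by simp) (by simp)



lemma inr_mem_sig {t : T} (h : (Sum.inr t : Symb N T) ∈ Sig G) : t ∈ T0 G := by
  rcases h with ⟨B, _, hEq⟩ | ⟨t', ht', hEq⟩
  · exact absurd hEq (by simp)
  · exact (Sum.inr_injective hEq) ▸ ht'

lemma em_inr (w : List T) :
    em (List.map Sum.inr w : List (Symb N T)) = List.map Sum.inr w := by
  induction w with
  | nil => rfl
  | cons a w ih => simpa [em, e] using ih

lemma complete {g : List (Symb N T)} (hg : Reach g G) :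
    ∃ u α v, g = u ++ [α] ++ v ∧
      Relation.ReflTransGen ((H G).Step true) [Sum.inl (H G).start]
        (em u ++ [hh (.rdy α)] ++ em v) := by
  induction hg with
  | refl =>
      refine ⟨[], Sum.inl G.start, [], by simp, ?_⟩
      have : (em ([] : List (Symb N T)) ++ [hh (.rdy (Sum.inl G.start))]
          ++ em ([] : List (Symb N T))) = [Sum.inl (H G).start] := by simp [em]; rfl
      rw [this]
  | @tail b c hab hstep ih =>
      obtain ⟨u, α, v, rfl, hR⟩ := ih
      obtain ⟨A, x, Per, For, u₀, v₀, hrG, hdec, rfl, hPer, hFor⟩ := hstep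
      rw [if_neg (by simp)] at hPer hFor
      set r : Rul N T := (A, x, Per, For) with hrdef
      have hPerFin : Per.Finite := by
        refine Set.Finite.subset (((u₀ ++ v₀).finite_toSet).preimage
          (Sum.inl_injective.injOn)) ?_
        intro B hB
        exact hPer B hB
      have hrU : r ∈ U G := ⟨hrG, hPerFin⟩
      obtain ⟨a, t, hxat⟩ : ∃ a t, x = a :: t := by
        cases hxx : x with
        | nil => exact absurd hxx (G.ne r hrG)
        | cons a t => exact ⟨a, t, rfl⟩
      have hdec' : u ++ α :: v = u₀ ++ Sum.inl A :: v₀ := by simpa using hdec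
      have hαS : α ∈ Sig G := reach_alph G hab (by simp [alph])
      rcases split3 hdec' with ⟨h1, h2, h3⟩ | ⟨w, h1, h2⟩ | ⟨w, h1, h2⟩
      · -- the head already covers the rewritten cell
        subst h1 h3
        obtain rfl : α = Sum.inl A := h2.symm
        have s1 : (H G).Step true (em u₀ ++ [hh (.rdy (Sum.inl A))] ++ em v₀)
            (em u₀ ++ [hh (chk0 G r)] ++ em v₀) :=
          hstep_mk G (u := em u₀) (v := em v₀) (mem_S1 G hrU)
            (by simp [hrdef]) (by simp) (by simp) (by simp)
        have hch := engine G u₀ v₀ r hrU hPer hFor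
        refine ⟨u₀, a, t ++ v₀, by simp [hxat], ?_⟩
        have := (hR.tail s1).trans hch
        rw [hrdef] at this
        simpa [hxat, commitRhs, em_append, List.append_assoc] using this
      · -- rewritten cell lies left of the head
        subst h1 h2
        have s1 : (H G).Step true
            (em (u₀ ++ Sum.inl A :: w) ++ [hh (.rdy α)] ++ em v)
            (em (u₀ ++ Sum.inl A :: w) ++ [hh (.seek r α)] ++ em v) :=
          hstep_mk G (u := em (u₀ ++ Sum.inl A :: w)) (v := em v)
            (mem_S1b G hrU hαS) (by simp) (by simp) (by simp) (by simp)
        have s2 : (H G).Step true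
            (em (u₀ ++ Sum.inl A :: w) ++ [hh (.seek r α)] ++ em v)
            (em u₀ ++ [hh (.pend r α)] ++ (em w ++ [hh (.seek r α)] ++ em v)) :=
          hstep_mk G (u := em u₀) (v := em w ++ [hh (.seek r α)] ++ em v)
            (mem_S2 G hrU hαS)
            (by simp [hrdef, em_append, List.append_assoc])
            (by simp [List.append_assoc])
            (by simp [alph])
            (by rintro z rfl; simp [alph, hrdef, em_append])
        have s3 : (H G).Step true
            (em u₀ ++ [hh (.pend r α)] ++ (em w ++ [hh (.seek r α)] ++ em v))
            (em u₀ ++ [hh (.pend r α)] ++ em (w ++ α :: v)) :=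
          hstep_mk G (u := em u₀ ++ [hh (.pend r α)] ++ em w) (v := em v)
            (mem_S3 G hrU hαS)
            (by simp [List.append_assoc])
            (by simp [em_append, List.append_assoc])
            (by simp [alph])
            (by simp)
        have s4 : (H G).Step true
            (em u₀ ++ [hh (.pend r α)] ++ em (w ++ α :: v))
            (em u₀ ++ [hh (chk0 G r)] ++ em (w ++ α :: v)) :=
          hstep_mk G (u := em u₀) (v := em (w ++ α :: v))
            (mem_S4 G hrU hαS)
            (by simp) (by simp) (by simp)
            (by rintro z rfl; simp [alph, hrdef, em_append])
        have hch := engine G u₀ (w ++ α :: v) r hrU hPer hFor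
        refine ⟨u₀, a, t ++ (w ++ α :: v), by simp [hxat], ?_⟩
        have := ((((hR.tail s1).tail s2).tail s3).tail s4).trans hch
        rw [hrdef] at this
        simpa [hxat, commitRhs, em_append, List.append_assoc] using this
      · -- rewritten cell lies right of the head
        subst h1 h2
        have s1 : (H G).Step true
            (em u ++ [hh (.rdy α)] ++ em (w ++ Sum.inl A :: v₀))
            (em u ++ [hh (.seek r α)] ++ em (w ++ Sum.inl A :: v₀)) :=
          hstep_mk G (u := em u) (v := em (w ++ Sum.inl A :: v₀))
            (mem_S1b G hrU hαS) (by simp) (by simp) (by simp) (by simp)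
        have s2 : (H G).Step true
            (em u ++ [hh (.seek r α)] ++ em (w ++ Sum.inl A :: v₀))
            (em u ++ [hh (.seek r α)] ++ (em w ++ [hh (.pend r α)] ++ em v₀)) :=
          hstep_mk G (u := em u ++ [hh (.seek r α)] ++ em w) (v := em v₀)
            (mem_S2 G hrU hαS)
            (by simp [hrdef, em_append, List.append_assoc])
            (by simp [List.append_assoc])
            (by simp [alph])
            (by rintro z rfl; simp [alph, hrdef, em_append])
        have s3 : (H G).Step true
            (em u ++ [hh (.seek r α)] ++ (em w ++ [hh (.pend r α)] ++ em v₀))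
            (em (u ++ α :: w) ++ [hh (.pend r α)] ++ em v₀) :=
          hstep_mk G (u := em u) (v := em w ++ [hh (.pend r α)] ++ em v₀)
            (mem_S3 G hrU hαS)
            (by simp [List.append_assoc])
            (by simp [em_append, List.append_assoc])
            (by simp [alph])
            (by simp)
        have s4 : (H G).Step true
            (em (u ++ α :: w) ++ [hh (.pend r α)] ++ em v₀)
            (em (u ++ α :: w) ++ [hh (chk0 G r)] ++ em v₀) :=
          hstep_mk G (u := em (u ++ α :: w)) (v := em v₀)
            (mem_S4 G hrU hαS)
            (by simp) (by simp) (by simp)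
            (by rintro z rfl; simp [alph, hrdef, em_append])
        have hch := engine G (u ++ α :: w) v₀ r hrU hPer hFor
        refine ⟨u ++ α :: w, a, t ++ v₀, by simp [hxat], ?_⟩
        have := ((((hR.tail s1).tail s2).tail s3).tail s4).trans hch
        rw [hrdef] at this
        simpa [hxat, commitRhs, em_append, List.append_assoc] using this

lemma complete_lang : G.Lang false ⊆ (H G).Lang true := by
  intro w hw
  obtain ⟨u, α, v, hdec, hR⟩ := complete G hw
  have hα : α ∈ List.map Sum.inr w := hdec ▸ (by simp [alph])
  rcases List.mem_map.1 hα with ⟨t, htw, rfl⟩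
  have htT : t ∈ T0 G :=
    inr_mem_sig G (reach_alph G hw (by rw [hdec]; simp [alph]))
  have s8 : (H G).Step true (em u ++ [hh (.rdy (Sum.inr t))] ++ em v)
      (em u ++ [(Sum.inr t : Symb (HSym N T) T)] ++ em v) :=
    hstep_mk G (u := em u) (v := em v) (mem_S8 G htT)
      (by simp) (by simp) (by simp) (by simp)
  have hfin := hR.tail s8
  have : em u ++ [(Sum.inr t : Symb (HSym N T) T)] ++ em v = List.map Sum.inr w := by
    have h2 : em (u ++ [Sum.inr t] ++ v) = em (List.map Sum.inr w) := by rw [← hdec]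
    rw [em_inr] at h2
    simpa [em_append] using h2
  rw [this] at hfin
  exact hfin

lemma lang_eq : (H G).Lang true = G.Lang false :=
  Set.Subset.antisymm (sound G) (complete_lang G)

end RCSC

/-- RC ⊆ SC(1,1). -/
theorem rc_subset_sc11 (T : Type) : RC T ⊆ SC11 T := by
  rintro L ⟨N, G, hG⟩
  exact ⟨RCSC.HSym N T, RCSC.H G, by rw [RCSC.lang_eq]; exact hG⟩
end
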